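/- arXiv:2604.11366 — 4 statements merged into one kernel-verified Lean document; each statement's English description precedes it below -/
import Mathlib

section
/- For every integer t ≥ 1 and every ε > 0 there exists N such that for all n ≥ N, every graph G on n vertices that contains no subgraph isomorphic to B_t satisfies e(G) ≤ (√t/2 + ε)·n^{3/2}. (That is, ex(n, B_t) ≤ (√t/2)(1+o(1))·n^{3/2}.) -/
open SimpleGraph

/-- `F` is contained in `G` as a subgraph: there is an injective map preserving adjacency. -/
def ContainsCopy {α β : Type*} (F : SimpleGraph α) (G : SimpleGraph β) : Prop :=
  ∃ f : α → β, Function.Injective f ∧ ∀ ⦃a b : α⦄, F.Adj a b → G.Adj (f a) (f b)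

/-- `Bgraph t = K₂ □ S_t`, the Cartesian product of an edge and a star with `t` edges. -/
def Bgraph (t : ℕ) : SimpleGraph (Fin 2 × (Fin 1 ⊕ Fin t)) :=
  (⊤ : SimpleGraph (Fin 2)).boxProd (completeBipartiteGraph (Fin 1) (Fin t))

namespace BtAux

variable {n : ℕ}

lemma builder {t : ℕ} (G : SimpleGraph (Fin n)) (x w : Fin n) (a b : Fin t → Fin n)
    (hxw : G.Adj x w)
    (hxa : ∀ j, G.Adj x (a j)) (hwb : ∀ j, G.Adj w (b j)) (hab : ∀ j, G.Adj (a j) (b j))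
    (ha : Function.Injective a) (hb : Function.Injective b)
    (hane : ∀ i j, a i ≠ b j)
    (haw : ∀ j, a j ≠ w) (hbx : ∀ j, b j ≠ x) :
    ContainsCopy (Bgraph t) G := by
  have hax : ∀ j, a j ≠ x := fun j h => G.irrefl (h ▸ (hxa j))
  have hbw : ∀ j, b j ≠ w := fun j h => G.irrefl (h ▸ (hwb j))
  have hxwne : x ≠ w := G.ne_of_adj hxw
  refine ⟨fun p => Sum.elim (fun _ => if p.1 = 0 then x else w)
      (fun j => if p.1 = 0 then a j else b j) p.2, ?_, ?_⟩
  · rintro ⟨i, z | j⟩ ⟨i', z' | j'⟩ h <;>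
      [ (have hz : z = z' := Subsingleton.elim _ _; subst hz); skip; skip; skip] <;>
      fin_cases i <;> fin_cases i' <;> simp at h ⊢ <;>
      first
        | exact hxwne h
        | exact hxwne h.symm
        | exact (hax _) h
        | exact (hax _) h.symm
        | exact (hbx _) h
        | exact (hbx _) h.symm
        | exact (haw _) h
        | exact (haw _) h.symm
        | exact (hbw _) h
        | exact (hbw _) h.symm
        | exact (hane _ _) h
        | exact (hane _ _) h.symm
        | exact ha h
        | exact hb h
  · rintro ⟨i, z⟩ ⟨i', z'⟩ hadj
    rw [Bgraph, boxProd_adj] at hadj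
    rcases hadj with ⟨h1, h2⟩ | ⟨h1, h2⟩
    · rw [top_adj] at h1
      subst h2
      rcases z with z | j <;> fin_cases i <;> fin_cases i' <;> simp <;>
        first
          | exact absurd rfl h1
          | exact hxw
          | exact hxw.symm
          | exact hab j
          | exact (hab j).symm
    · subst h2
      rcases z with z | j <;> rcases z' with z' | j'
      · exfalso; simp at h1
      · fin_cases i <;> simp <;> first | exact hxa j' | exact hwb j'
      · fin_cases i <;> simp <;> first | exact (hxa j).symm | exact (hwb j).symm
      · exfalso; simp at h1

end BtAux

namespace BtAux

variable {n : ℕ}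

lemma bip_builder {t : ℕ} (G : SimpleGraph (Fin n)) (A B : Finset (Fin n))
    (hA : A.card = t + 1) (hB : B.card = t + 1) (hdisj : Disjoint A B)
    (hadj : ∀ a ∈ A, ∀ b ∈ B, G.Adj a b) :
    ContainsCopy (Bgraph t) G := by
  set ea := A.orderIsoOfFin hA with hea
  set eb := B.orderIsoOfFin hB with heb
  have haA : ∀ i, (ea i : Fin n) ∈ A := fun i => (ea i).2
  have hbB : ∀ i, (eb i : Fin n) ∈ B := fun i => (eb i).2
  have hainj : Function.Injective (fun i => (ea i : Fin n)) := fun i j h => by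
    apply ea.injective; exact Subtype.ext h
  have hbinj : Function.Injective (fun i => (eb i : Fin n)) := fun i j h => by
    apply eb.injective; exact Subtype.ext h
  have hne : ∀ i j, (eb i : Fin n) ≠ (ea j : Fin n) := fun i j h => by
    exact Finset.disjoint_left.mp hdisj (haA j) (h ▸ hbB i)
  refine builder G (ea 0) (eb 0) (fun j => eb j.succ) (fun j => ea j.succ)
    (hadj _ (haA 0) _ (hbB 0))
    (fun j => hadj _ (haA 0) _ (hbB j.succ))
    (fun j => (hadj _ (haA j.succ) _ (hbB 0)).symm)
    (fun j => (hadj _ (haA j.succ) _ (hbB j.succ)).symm)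
    (fun i j h => Fin.succ_injective _ (hbinj h))
    (fun i j h => Fin.succ_injective _ (hainj h))
    (fun i j => hne i.succ j.succ)
    (fun j h => by exact (Fin.succ_ne_zero j) (hbinj h))
    (fun j h => by exact (Fin.succ_ne_zero j) (hainj h))

end BtAux

namespace BtAux

variable {n : ℕ}

/-- Disjointness of two pairs. -/
def Dis (p q : Fin n × Fin n) : Prop := p.1 ≠ q.1 ∧ p.1 ≠ q.2 ∧ p.2 ≠ q.1 ∧ p.2 ≠ q.2

lemma sys_builder {t : ℕ} (G : SimpleGraph (Fin n)) (x w : Fin n) (hxw : G.Adj x w)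
    (M : List (Fin n × Fin n)) (hlen : M.length = t) (hpw : M.Pairwise Dis)
    (hgood : ∀ p ∈ M, G.Adj x p.1 ∧ G.Adj p.1 p.2 ∧ G.Adj w p.2 ∧ p.1 ≠ w ∧ p.2 ≠ x) :
    ContainsCopy (Bgraph t) G := by
  have hpw' := List.pairwise_iff_get.mp hpw
  set a : Fin t → Fin n := fun j => (M.get (Fin.cast hlen.symm j)).1 with haDef
  set b : Fin t → Fin n := fun j => (M.get (Fin.cast hlen.symm j)).2 with hbDef
  have hmem : ∀ j : Fin t, M.get (Fin.cast hlen.symm j) ∈ M := fun j => M.get_mem _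
  have hcast_inj : ∀ {i j : Fin t}, Fin.cast hlen.symm i = Fin.cast hlen.symm j → i = j := by
    intro i j h
    have := congrArg (fun z : Fin M.length => z.val) h
    exact Fin.ext this
  have hcast_lt : ∀ {i j : Fin t}, i < j → Fin.cast hlen.symm i < Fin.cast hlen.symm j := by
    intro i j h; exact h
  have key : ∀ i j : Fin t, i ≠ j → Dis (M.get (Fin.cast hlen.symm i)) (M.get (Fin.cast hlen.symm j)) ∨
      Dis (M.get (Fin.cast hlen.symm j)) (M.get (Fin.cast hlen.symm i)) := by
    intro i j hij
    rcases lt_or_gt_of_ne hij with h | h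
    · exact Or.inl (hpw' _ _ (hcast_lt h))
    · exact Or.inr (hpw' _ _ (hcast_lt h))
  apply builder G x w a b hxw
  · exact fun j => (hgood _ (hmem j)).1
  · exact fun j => (hgood _ (hmem j)).2.2.1
  · exact fun j => (hgood _ (hmem j)).2.1
  · intro i j h
    by_contra hij
    rcases key i j hij with hd | hd
    · exact hd.1 h
    · exact hd.1 h.symm
  · intro i j h
    by_contra hij
    rcases key i j hij with hd | hd
    · exact hd.2.2.2 h
    · exact hd.2.2.2 h.symm
  · intro i j
    by_cases hij : i = j
    · subst hij; exact G.ne_of_adj (hgood _ (hmem i)).2.1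
    · rcases key i j hij with hd | hd
      · exact hd.2.1
      · exact hd.2.2.1.symm
  · exact fun j => (hgood _ (hmem j)).2.2.2.1
  · exact fun j => (hgood _ (hmem j)).2.2.2.2

end BtAux

namespace BtAux

open Finset

variable {n : ℕ}

def codeg (G : SimpleGraph (Fin n)) [DecidableRel G.Adj] (x y : Fin n) : ℕ :=
  (G.neighborFinset x ∩ G.neighborFinset y).card

def Kt (t : ℕ) : ℕ := 2 * t + 2 + (t + 1) * 2 ^ (2 * t + 2)

lemma grow (G : SimpleGraph (Fin n)) [DecidableRel G.Adj] {t : ℕ}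
    (hBt : ¬ ContainsCopy (Bgraph t) G) (x w : Fin n) (hxw : G.Adj x w)
    (Y : Finset (Fin n)) (hYx : ∀ y ∈ Y, y ≠ x) (hYw : ∀ y ∈ Y, G.Adj w y)
    (hYco : ∀ y ∈ Y, t + 1 ≤ codeg G x y) (hYcard : Kt t + 1 ≤ Y.card) :
    ∀ ℓ, ℓ ≤ t → ∃ M : List (Fin n × Fin n), M.length = ℓ ∧ M.Pairwise Dis ∧
      ∀ p ∈ M, p.2 ∈ Y ∧ p.1 ∈ G.neighborFinset x ∩ G.neighborFinset p.2 ∧ p.1 ≠ w := by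
  intro ℓ
  induction ℓ with
  | zero => exact fun _ => ⟨[], rfl, List.Pairwise.nil, by simp⟩
  | succ ℓ ih =>
    intro hℓ
    obtain ⟨M, hlen, hpw, hgood⟩ := ih (le_trans (Nat.le_succ ℓ) hℓ)
    set U : Finset (Fin n) :=
      insert x (insert w (M.toFinset.biUnion (fun p => {p.1, p.2}))) with hU
    have hxU : x ∈ U := by simp [hU]
    have hwU : w ∈ U := by simp [hU]
    have hPU : ∀ p ∈ M, p.1 ∈ U ∧ p.2 ∈ U := by
      intro p hp
      constructor <;>
      · simp only [hU, mem_insert, mem_biUnion]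
        right; right
        exact ⟨p, List.mem_toFinset.mpr hp, by simp⟩
    have hUcard : U.card ≤ 2 + 2 * ℓ := by
      calc U.card ≤ (M.toFinset.biUnion (fun p => {p.1, p.2})).card + 2 := by
            apply le_trans (card_insert_le _ _)
            have := card_insert_le w (M.toFinset.biUnion (fun p => ({p.1, p.2} : Finset (Fin n))))
            omega
        _ ≤ 2 * ℓ + 2 := by
            have h1 : (M.toFinset.biUnion (fun p => ({p.1, p.2} : Finset (Fin n)))).card
                ≤ ∑ p ∈ M.toFinset, ({p.1, p.2} : Finset (Fin n)).card := card_biUnion_le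
            have h2 : ∑ p ∈ M.toFinset, ({p.1, p.2} : Finset (Fin n)).card
                ≤ ∑ p ∈ M.toFinset, 2 := by
              apply sum_le_sum
              intro p _
              apply le_trans (card_insert_le _ _)
              simp
            have h3 : M.toFinset.card ≤ M.length := M.toFinset_card_le
            simp only [sum_const, smul_eq_mul] at h2
            omega
        _ = 2 + 2 * ℓ := by omega
    by_cases hcase : ∃ y ∈ Y, y ∉ U ∧ ¬ (G.neighborFinset x ∩ G.neighborFinset y ⊆ U)
    · obtain ⟨y, hyY, hyU, hyS⟩ := hcase
      obtain ⟨a, haS, haU⟩ := Finset.not_subset.mp hyS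
      refine ⟨(a, y) :: M, by simp [hlen], ?_, ?_⟩
      · refine List.pairwise_cons.mpr ⟨?_, hpw⟩
        intro q hq
        obtain ⟨hq1, hq2⟩ := hPU q hq
        exact ⟨fun h => haU ((show a = q.1 from h) ▸ hq1),
               fun h => haU ((show a = q.2 from h) ▸ hq2),
               fun h => hyU ((show y = q.1 from h) ▸ hq1),
               fun h => hyU ((show y = q.2 from h) ▸ hq2)⟩
      · intro p hp
        rcases List.mem_cons.mp hp with h | h
        · subst h
          exact ⟨hyY, haS, fun h => haU ((show a = w from h) ▸ hwU)⟩
        · exact hgood p h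
    · push_neg at hcase
      exfalso
      apply hBt
      set Y' : Finset (Fin n) := Y \ U with hY'
      have hUcard' : U.card ≤ 2 * t + 2 := by omega
      have hY'card : (t + 1) * 2 ^ (2 * t + 2) + 1 ≤ Y'.card := by
        have h1 : Y.card - U.card ≤ Y'.card := le_card_sdiff U Y
        have h2 : Kt t + 1 - (2 * t + 2) ≤ Y'.card := by omega
        have h3 : Kt t + 1 - (2 * t + 2) = (t + 1) * 2 ^ (2 * t + 2) + 1 := by
          simp only [Kt]; omega
        omega
      have hmaps : ∀ y ∈ Y', (G.neighborFinset x ∩ G.neighborFinset y) ∈ U.powerset := by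
        intro y hy
        rw [mem_powerset]
        obtain ⟨hyY, hyU⟩ := mem_sdiff.mp hy
        exact hcase y hyY hyU
      have hpcard : U.powerset.card * (t + 1) ≤ Y'.card := by
        rw [card_powerset]
        have h2 : (2:ℕ) ^ U.card ≤ 2 ^ (2 * t + 2) := Nat.pow_le_pow_right (by norm_num) hUcard'
        calc 2 ^ U.card * (t + 1) ≤ 2 ^ (2 * t + 2) * (t + 1) := by
              exact Nat.mul_le_mul_right _ h2
          _ ≤ Y'.card := by rw [mul_comm]; omega
      obtain ⟨S, hS, hfib⟩ := exists_le_card_fiber_of_mul_le_card_of_maps_to hmaps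
        ⟨∅, empty_mem_powerset U⟩ hpcard
      set Y'' := {y ∈ Y' | G.neighborFinset x ∩ G.neighborFinset y = S} with hY''
      have hY''ne : Y''.Nonempty := card_pos.mp (by omega)
      obtain ⟨y₀, hy₀⟩ := hY''ne
      have hy₀' := mem_filter.mp hy₀
      have hScard : t + 1 ≤ S.card := by
        rw [← hy₀'.2]
        exact hYco y₀ (mem_sdiff.mp hy₀'.1).1
      obtain ⟨T, hTS, hTcard⟩ := exists_subset_card_eq hScard
      obtain ⟨B', hB'Y, hB'card⟩ := exists_subset_card_eq hfib
      have hTU : T ⊆ U := hTS.trans (mem_powerset.mp hS)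
      have hdisj : Disjoint T B' := by
        rw [Finset.disjoint_left]
        intro a haT haB
        have h1 := mem_sdiff.mp (mem_filter.mp (hB'Y haB)).1
        exact h1.2 (hTU haT)
      apply bip_builder G T B' hTcard hB'card hdisj
      intro a haT b hbB
      have hSb : G.neighborFinset x ∩ G.neighborFinset b = S := (mem_filter.mp (hB'Y hbB)).2
      have : a ∈ G.neighborFinset b := by
        have := hTS haT
        rw [← hSb] at this
        exact (mem_inter.mp this).2
      exact ((mem_neighborFinset G b a).mp this).symm

end BtAux

namespace BtAux

open Finset

variable {n : ℕ}

lemma count_heavy (G : SimpleGraph (Fin n)) [DecidableRel G.Adj] {t : ℕ}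
    (hBt : ¬ ContainsCopy (Bgraph t) G) (x w : Fin n) (hxw : G.Adj x w) :
    ({y ∈ (univ : Finset (Fin n)) | y ≠ x ∧ G.Adj w y ∧ t + 1 ≤ codeg G x y}).card ≤ Kt t := by
  by_contra hc
  push_neg at hc
  set Y := {y ∈ (univ : Finset (Fin n)) | y ≠ x ∧ G.Adj w y ∧ t + 1 ≤ codeg G x y} with hY
  have hprop : ∀ y ∈ Y, y ≠ x ∧ G.Adj w y ∧ t + 1 ≤ codeg G x y := by
    intro y hy
    exact (mem_filter.mp hy).2
  obtain ⟨M, hlen, hpw, hgood⟩ := grow G hBt x w hxw Y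
    (fun y hy => (hprop y hy).1) (fun y hy => (hprop y hy).2.1)
    (fun y hy => (hprop y hy).2.2) (by omega) t le_rfl
  apply hBt
  apply sys_builder G x w hxw M hlen hpw
  intro p hp
  obtain ⟨h2Y, h1mem, h1w⟩ := hgood p hp
  obtain ⟨h1x, h1p2⟩ := mem_inter.mp h1mem
  exact ⟨(mem_neighborFinset G x p.1).mp h1x,
         ((mem_neighborFinset G p.2 p.1).mp h1p2).symm,
         (hprop p.2 h2Y).2.1, h1w, (hprop p.2 h2Y).1⟩

lemma per_vertex (G : SimpleGraph (Fin n)) [DecidableRel G.Adj] {t : ℕ}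
    (hBt : ¬ ContainsCopy (Bgraph t) G) (x : Fin n) :
    ∑ y ∈ univ.erase x, codeg G x y ≤ t * n + (Kt t + 1) * G.degree x := by
  classical
  have hsplit := sum_filter_add_sum_filter_not (univ.erase x)
    (fun y => codeg G x y ≤ t) (fun y => codeg G x y)
  rw [← hsplit]
  have hlight : ∑ y ∈ {y ∈ univ.erase x | codeg G x y ≤ t}, codeg G x y ≤ t * n := by
    calc ∑ y ∈ {y ∈ univ.erase x | codeg G x y ≤ t}, codeg G x y
        ≤ ∑ _y ∈ {y ∈ univ.erase x | codeg G x y ≤ t}, t := by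
          apply sum_le_sum
          intro i hi
          exact (mem_filter.mp hi).2
      _ = {y ∈ univ.erase x | codeg G x y ≤ t}.card * t := by
          rw [sum_const, smul_eq_mul]
      _ ≤ n * t := by
          apply Nat.mul_le_mul_right
          calc {y ∈ univ.erase x | codeg G x y ≤ t}.card ≤ (univ.erase x).card :=
                card_filter_le _ _
            _ ≤ (univ : Finset (Fin n)).card := card_erase_le.trans (by simp)
            _ = n := by simp
      _ = t * n := Nat.mul_comm n t
  have hheavy : ∑ y ∈ {y ∈ univ.erase x | ¬ codeg G x y ≤ t}, codeg G x y
      ≤ (Kt t + 1) * G.degree x := by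
    set H := {y ∈ univ.erase x | ¬ codeg G x y ≤ t} with hH
    have hco : ∀ y ∈ H, codeg G x y
        = ∑ w ∈ G.neighborFinset x, (if y ∈ G.neighborFinset w then 1 else 0) := by
      intro y _
      rw [codeg]
      have heq : G.neighborFinset x ∩ G.neighborFinset y
          = {w ∈ G.neighborFinset x | y ∈ G.neighborFinset w} := by
        ext w
        simp only [mem_inter, mem_filter, mem_neighborFinset]
        constructor
        · rintro ⟨h1, h2⟩; exact ⟨h1, h2.symm⟩
        · rintro ⟨h1, h2⟩; exact ⟨h1, h2.symm⟩
      rw [heq, card_filter]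
    calc ∑ y ∈ H, codeg G x y
        = ∑ y ∈ H, ∑ w ∈ G.neighborFinset x, (if y ∈ G.neighborFinset w then 1 else 0) :=
          sum_congr rfl hco
      _ = ∑ w ∈ G.neighborFinset x, ∑ y ∈ H, (if y ∈ G.neighborFinset w then 1 else 0) :=
          sum_comm
      _ = ∑ w ∈ G.neighborFinset x, ({y ∈ H | y ∈ G.neighborFinset w}).card := by
          apply sum_congr rfl
          intro w _
          rw [card_filter]
      _ ≤ ∑ _w ∈ G.neighborFinset x, Kt t := by
          apply sum_le_sum
          intro w hw
          have hsub : {y ∈ H | y ∈ G.neighborFinset w}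
              ⊆ {y ∈ (univ : Finset (Fin n)) | y ≠ x ∧ G.Adj w y ∧ t + 1 ≤ codeg G x y} := by
            intro y hy
            obtain ⟨hyH, hyw⟩ := mem_filter.mp hy
            obtain ⟨hyE, hyco⟩ := mem_filter.mp hyH
            rw [mem_filter]
            exact ⟨mem_univ y, ne_of_mem_erase hyE,
                   (mem_neighborFinset G w y).mp hyw, by omega⟩
          exact le_trans (card_le_card hsub)
            (count_heavy G hBt x w ((mem_neighborFinset G x w).mp hw))
      _ = G.degree x * Kt t := by rw [sum_const, smul_eq_mul, SimpleGraph.degree]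
      _ ≤ (Kt t + 1) * G.degree x := by
          rw [mul_comm]
          exact Nat.mul_le_mul_right _ (Nat.le_succ _)
  omega

end BtAux

namespace BtAux

open Finset

variable {n : ℕ}

lemma global_count (G : SimpleGraph (Fin n)) [DecidableRel G.Adj] :
    ∑ x : Fin n, ∑ y ∈ univ.erase x, codeg G x y
      = ∑ v : Fin n, G.degree v * (G.degree v - 1) := by
  have step1 : ∀ x : Fin n, ∑ y ∈ univ.erase x, codeg G x y
      = ∑ v : Fin n, if v ∈ G.neighborFinset x
          then ((G.neighborFinset v).erase x).card else 0 := by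
    intro x
    have hcodeg : ∀ y, codeg G x y = ∑ v : Fin n,
        if v ∈ G.neighborFinset x ∧ v ∈ G.neighborFinset y then 1 else 0 := by
      intro y
      have heq : G.neighborFinset x ∩ G.neighborFinset y
          = {v ∈ (univ : Finset (Fin n)) |
              v ∈ G.neighborFinset x ∧ v ∈ G.neighborFinset y} := by
        ext v; simp
      rw [codeg, heq, card_filter]
    calc ∑ y ∈ univ.erase x, codeg G x y
        = ∑ y ∈ univ.erase x, ∑ v : Fin n,
            if v ∈ G.neighborFinset x ∧ v ∈ G.neighborFinset y then 1 else 0 :=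
          sum_congr rfl (fun y _ => hcodeg y)
      _ = ∑ v : Fin n, ∑ y ∈ univ.erase x,
            if v ∈ G.neighborFinset x ∧ v ∈ G.neighborFinset y then 1 else 0 := sum_comm
      _ = ∑ v : Fin n, if v ∈ G.neighborFinset x
            then ((G.neighborFinset v).erase x).card else 0 := by
          apply sum_congr rfl
          intro v _
          by_cases hv : v ∈ G.neighborFinset x
          · simp only [hv, true_and, if_true]
            have hfe : {y ∈ univ.erase x | v ∈ G.neighborFinset y}
                = (G.neighborFinset v).erase x := by
              ext y
              simp only [mem_filter, mem_erase, mem_univ, true_and, and_true,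
                mem_neighborFinset]
              constructor
              · rintro ⟨h1, h2⟩; exact ⟨h1, h2.symm⟩
              · rintro ⟨h1, h2⟩; exact ⟨h1, h2.symm⟩
            rw [← hfe, card_filter]
          · simp [hv]
  calc ∑ x : Fin n, ∑ y ∈ univ.erase x, codeg G x y
      = ∑ x : Fin n, ∑ v : Fin n, if v ∈ G.neighborFinset x
          then ((G.neighborFinset v).erase x).card else 0 :=
        sum_congr rfl (fun x _ => step1 x)
    _ = ∑ v : Fin n, ∑ x : Fin n, if v ∈ G.neighborFinset x
          then ((G.neighborFinset v).erase x).card else 0 := sum_comm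
    _ = ∑ v : Fin n, ∑ x ∈ G.neighborFinset v, ((G.neighborFinset v).erase x).card := by
        apply sum_congr rfl
        intro v _
        rw [← sum_filter]
        apply sum_congr
        · ext x
          simp only [mem_filter, mem_univ, true_and, mem_neighborFinset]
          constructor
          · exact fun h => h.symm
          · exact fun h => h.symm
        · intro x _; rfl
    _ = ∑ v : Fin n, ∑ _x ∈ G.neighborFinset v, (G.degree v - 1) := by
        apply sum_congr rfl
        intro v _
        apply sum_congr rfl
        intro x hx
        rw [card_erase_of_mem hx, SimpleGraph.degree]
    _ = ∑ v : Fin n, G.degree v * (G.degree v - 1) := by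
        apply sum_congr rfl
        intro v _
        rw [sum_const, smul_eq_mul, SimpleGraph.degree]

end BtAux

namespace BtAux

open Finset

variable {n : ℕ}

lemma main_count (G : SimpleGraph (Fin n)) [DecidableRel G.Adj] {t : ℕ}
    (hBt : ¬ ContainsCopy (Bgraph t) G) :
    4 * G.edgeFinset.card ^ 2
      ≤ t * n ^ 3 + (2 * Kt t + 4) * G.edgeFinset.card * n := by
  set m := G.edgeFinset.card with hm
  have hdeg : ∑ v : Fin n, G.degree v = 2 * m := G.sum_degrees_eq_twice_card_edges
  have hglobal : ∑ v : Fin n, G.degree v * (G.degree v - 1)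
      ≤ t * n ^ 2 + (Kt t + 1) * (2 * m) := by
    rw [← global_count G, ← hdeg, mul_sum]
    calc ∑ x : Fin n, ∑ y ∈ univ.erase x, codeg G x y
        ≤ ∑ x : Fin n, (t * n + (Kt t + 1) * G.degree x) :=
          sum_le_sum (fun x _ => per_vertex G hBt x)
      _ = t * n ^ 2 + ∑ x : Fin n, (Kt t + 1) * G.degree x := by
          rw [sum_add_distrib, sum_const]
          simp [sq, mul_comm, mul_assoc, mul_left_comm]
  have hsq : ∑ v : Fin n, G.degree v ^ 2
      ≤ t * n ^ 2 + (Kt t + 2) * (2 * m) := by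
    have h1 : ∑ v : Fin n, G.degree v ^ 2
        ≤ ∑ v : Fin n, G.degree v * (G.degree v - 1) + ∑ v : Fin n, G.degree v := by
      rw [← sum_add_distrib]
      apply sum_le_sum
      intro v _
      rcases Nat.eq_zero_or_pos (G.degree v) with h | h
      · simp [h]
      · have : G.degree v - 1 + 1 = G.degree v := Nat.succ_pred_eq_of_pos h
        nlinarith [this]
    calc ∑ v : Fin n, G.degree v ^ 2
        ≤ t * n ^ 2 + (Kt t + 1) * (2 * m) + 2 * m := by
          rw [hdeg] at h1; omega
      _ = t * n ^ 2 + (Kt t + 2) * (2 * m) := by ring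
  have hCS : (2 * m) ^ 2 ≤ n * ∑ v : Fin n, G.degree v ^ 2 := by
    have := sum_mul_sq_le_sq_mul_sq (R := ℕ) univ (fun _ : Fin n => 1) (fun v => G.degree v)
    simp only [one_mul, one_pow, sum_const, card_univ, Fintype.card_fin, smul_eq_mul,
      mul_one] at this
    rw [← hdeg]
    exact this
  calc 4 * m ^ 2 = (2 * m) ^ 2 := by ring
    _ ≤ n * ∑ v : Fin n, G.degree v ^ 2 := hCS
    _ ≤ n * (t * n ^ 2 + (Kt t + 2) * (2 * m)) := Nat.mul_le_mul_left _ hsq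
    _ = t * n ^ 3 + (2 * Kt t + 4) * m * n := by ring

end BtAux


open BtAux in
theorem ex_Bt_upper (t : ℕ) (ht : 1 ≤ t) (ε : ℝ) (hε : 0 < ε) :
    ∃ N : ℕ, ∀ n : ℕ, N ≤ n → ∀ G : SimpleGraph (Fin n),
      ¬ ContainsCopy (Bgraph t) G →
      (G.edgeSet.ncard : ℝ) ≤ (Real.sqrt t / 2 + ε) * (n : ℝ) ^ (3/2 : ℝ) := by
  set C : ℝ := ((2 * Kt t + 4 : ℕ) : ℝ) with hC
  have hC0 : 0 ≤ C := by positivity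
  refine ⟨max 1 (Nat.ceil ((C / (4 * ε)) ^ 2) + 1), ?_⟩
  intro n hn G hBt
  letI : DecidableRel G.Adj := Classical.decRel _
  have hn1 : 1 ≤ n := le_trans (le_max_left _ _) hn
  have hedge : G.edgeSet.ncard = G.edgeFinset.card := by
    rw [SimpleGraph.edgeFinset, Set.ncard_eq_toFinset_card']
  rw [hedge]
  set m := G.edgeFinset.card with hm
  have hmain := main_count G hBt
  -- real versions
  set r : ℝ := Real.sqrt n with hr
  set s : ℝ := Real.sqrt t with hs
  have hr0 : 0 ≤ r := Real.sqrt_nonneg _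
  have hs0 : 0 ≤ s := Real.sqrt_nonneg _
  have hr2 : r ^ 2 = (n : ℝ) := Real.sq_sqrt (by positivity)
  have hs2 : s ^ 2 = (t : ℝ) := Real.sq_sqrt (by positivity)
  have hr1 : 1 ≤ r := by
    rw [hr]
    have h1 : (1 : ℝ) ≤ (n : ℝ) := by exact_mod_cast hn1
    have := Real.sqrt_le_sqrt h1
    rwa [Real.sqrt_one] at this
  have hrC : C ≤ 4 * ε * r := by
    have h1 : ((C / (4 * ε)) ^ 2 : ℝ) ≤ (n : ℝ) := by
      have h2 : (Nat.ceil ((C / (4 * ε)) ^ 2) : ℝ) ≤ n := by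
        have := le_trans (le_max_right 1 (Nat.ceil ((C / (4 * ε)) ^ 2) + 1)) hn
        exact_mod_cast le_trans (Nat.le_succ _) this
      exact le_trans (Nat.le_ceil _) h2
    have h3 : C / (4 * ε) ≤ r := by
      rw [hr]
      have := Real.sqrt_le_sqrt h1
      rwa [Real.sqrt_sq (by positivity)] at this
    calc C = (4 * ε) * (C / (4 * ε)) := by field_simp
      _ ≤ (4 * ε) * r := by
          apply mul_le_mul_of_nonneg_left h3 (by positivity)
  -- cast the main inequality
  have hmainR : 4 * (m : ℝ) ^ 2 ≤ s ^ 2 * r ^ 6 + C * m * r ^ 2 := by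
    have h0 : ((4 * m ^ 2 : ℕ) : ℝ) ≤ ((t * n ^ 3 + (2 * Kt t + 4) * m * n : ℕ) : ℝ) := by
      exact_mod_cast hmain
    push_cast at h0
    have h2 : 4 * (m : ℝ) ^ 2 ≤ (t : ℝ) * (n : ℝ) ^ 3 + C * (m : ℝ) * (n : ℝ) := by
      calc 4 * (m : ℝ) ^ 2 ≤ (t : ℝ) * (n : ℝ) ^ 3 + (2 * (Kt t : ℝ) + 4) * m * n := h0
        _ = (t : ℝ) * (n : ℝ) ^ 3 + C * (m : ℝ) * (n : ℝ) := by rw [hC]; push_cast; ring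
    have e1 : (t : ℝ) * (n : ℝ) ^ 3 = s ^ 2 * r ^ 6 := by
      rw [hs2, ← hr2]; ring
    have e2 : C * (m : ℝ) * (n : ℝ) = C * (m : ℝ) * r ^ 2 := by rw [← hr2]
    rw [e1, e2] at h2
    exact h2
  -- n^(3/2) = r^3
  have hpow : (n : ℝ) ^ (3/2 : ℝ) = r ^ 3 := by
    rw [hr, show (3/2 : ℝ) = (1/2 : ℝ) * (3 : ℕ) by norm_num,
      Real.rpow_mul (by positivity), Real.rpow_natCast, ← Real.sqrt_eq_rpow]
  rw [hpow]
  by_contra hcon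
  push_neg at hcon
  have hb0 : 0 ≤ (s / 2 + ε) * r ^ 3 := by positivity
  have hm0 : (0 : ℝ) < m := lt_of_le_of_lt hb0 hcon
  have step1 : C * (m : ℝ) * r ^ 2 ≤ 4 * ε * (m : ℝ) * r ^ 3 := by
    have h1 : C * ((m : ℝ) * r ^ 2) ≤ (4 * ε * r) * ((m : ℝ) * r ^ 2) :=
      mul_le_mul_of_nonneg_right hrC (by positivity)
    have h2 : C * (m : ℝ) * r ^ 2 = C * ((m : ℝ) * r ^ 2) := by ring
    have h3 : (4 * ε * r) * ((m : ℝ) * r ^ 2) = 4 * ε * (m : ℝ) * r ^ 3 := by ring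
    linarith
  have step2 : s ^ 2 * r ^ 6 ≤ 2 * s * (m : ℝ) * r ^ 3 := by
    have h4 : (2 * s * r ^ 3) * ((s / 2 + ε) * r ^ 3) ≤ (2 * s * r ^ 3) * m :=
      mul_le_mul_of_nonneg_left hcon.le (by positivity)
    have h5 : (2 * s * r ^ 3) * ((s / 2 + ε) * r ^ 3) = s ^ 2 * r ^ 6 + 2 * s * ε * r ^ 6 := by
      ring
    have h6 : 0 ≤ 2 * s * ε * r ^ 6 := by positivity
    have h7 : (2 * s * r ^ 3) * (m : ℝ) = 2 * s * (m : ℝ) * r ^ 3 := by ring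
    linarith
  have step3 : 2 * s * (m : ℝ) * r ^ 3 + 4 * ε * (m : ℝ) * r ^ 3 < 4 * (m : ℝ) ^ 2 := by
    have h8 : (0 : ℝ) < 4 * (m : ℝ) := by linarith
    have h9 : (4 * (m : ℝ)) * ((s / 2 + ε) * r ^ 3) < (4 * (m : ℝ)) * m :=
      mul_lt_mul_of_pos_left hcon h8
    have h10 : (4 * (m : ℝ)) * ((s / 2 + ε) * r ^ 3)
        = 2 * s * (m : ℝ) * r ^ 3 + 4 * ε * (m : ℝ) * r ^ 3 := by ring
    have h11 : (4 * (m : ℝ)) * (m : ℝ) = 4 * (m : ℝ) ^ 2 := by ring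
    linarith
  linarith [hmainR, step1, step2, step3]
end

section
/- Let T be a tree with t vertices (t ≥ 2). For every ε > 0 there exists N such that for all n ≥ N, every bipartite graph G on n vertices that contains no subgraph isomorphic to K_2 □ T satisfies e(G) ≤ (√(t−1)/(2√2) + ε)·n^{3/2}. (That is, ex_bip(n, K_2 □ T) ≤ (√(t−1)/(2√2))(1+o(1))·n^{3/2}.) -/
open SimpleGraph

open Finset
open scoped Classical

variable {n : ℕ}

/-- Neighbor finset, no decidability needed. -/
noncomputable def Nb (G : SimpleGraph (Fin n)) (v : Fin n) : Finset (Fin n) :=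
  (G.neighborSet v).toFinite.toFinset

lemma mem_Nb {G : SimpleGraph (Fin n)} {v x : Fin n} : x ∈ Nb G v ↔ G.Adj v x := by
  simp [Nb]

lemma Nb_comm {G : SimpleGraph (Fin n)} {v x : Fin n} : x ∈ Nb G v ↔ v ∈ Nb G x := by
  simp [mem_Nb, adj_comm]

/-- codegree -/
noncomputable def codeg (G : SimpleGraph (Fin n)) (x y : Fin n) : ℕ := #(Nb G x ∩ Nb G y)

lemma codeg_comm (G : SimpleGraph (Fin n)) (x y : Fin n) : codeg G x y = codeg G y x := by
  rw [codeg, codeg, inter_comm]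

/-- `Wg G t R y w` : the vertex `w` is a good witness for expansions at `y`. -/
noncomputable def Wg (G : SimpleGraph (Fin n)) (t : ℕ) (R : Fin n → Fin n → Prop) (y w : Fin n) :
    Prop := 2*t ≤ #((Nb G w).filter fun z => R y z)

/-- The richness hierarchy. -/
noncomputable def Rich (G : SimpleGraph (Fin n)) (t : ℕ) : ℕ → Fin n → Fin n → Prop
  | 0 => fun x y => x ≠ y ∧ t ≤ codeg G x y
  | (s+1) => fun x y => x ≠ y ∧ t ≤ codeg G x y
      ∧ t ≤ #((Nb G x ∩ Nb G y).filter (Wg G t (Rich G t s) y))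
      ∧ t ≤ #((Nb G x ∩ Nb G y).filter (Wg G t (Rich G t s) x))

lemma rich_ne {G : SimpleGraph (Fin n)} {t s : ℕ} {x y : Fin n} (h : Rich G t s x y) :
    x ≠ y ∧ t ≤ codeg G x y := by
  cases s with
  | zero => exact h
  | succ s => exact ⟨h.1, h.2.1⟩

lemma rich_symm {G : SimpleGraph (Fin n)} {t s : ℕ} {x y : Fin n} (h : Rich G t s x y) :
    Rich G t s y x := by
  cases s with
  | zero => exact ⟨h.1.symm, by rw [codeg_comm]; exact h.2⟩
  | succ s =>
    obtain ⟨h1, h2, h3, h4⟩ := h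
    refine ⟨h1.symm, by rwa [codeg_comm], ?_, ?_⟩ <;> rw [inter_comm]
    exacts [h4, h3]

lemma wg_mono {G : SimpleGraph (Fin n)} {t : ℕ} {R R' : Fin n → Fin n → Prop}
    (h : ∀ a b, R a b → R' a b) {y w : Fin n} (hw : Wg G t R y w) : Wg G t R' y w :=
  le_trans hw (card_le_card (monotone_filter_right _ (fun z _ hz => h _ _ hz)))

lemma rich_succ_mono {G : SimpleGraph (Fin n)} {t : ℕ} : ∀ (s : ℕ) (x y : Fin n),
    Rich G t (s+1) x y → Rich G t s x y := by
  intro s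
  induction s with
  | zero => exact fun x y h => ⟨h.1, h.2.1⟩
  | succ s ih =>
    intro x y h
    obtain ⟨h1, h2, h3, h4⟩ := h
    refine ⟨h1, h2, ?_, ?_⟩
    · exact le_trans h3 (card_le_card (monotone_filter_right _
        (fun w _ hw => wg_mono (fun a b hr => ih a b hr) hw)))
    · exact le_trans h4 (card_le_card (monotone_filter_right _
        (fun w _ hw => wg_mono (fun a b hr => ih a b hr) hw)))

lemma rich_mono {G : SimpleGraph (Fin n)} {t : ℕ} {s s' : ℕ} (hs : s' ≤ s) {x y : Fin n}
    (h : Rich G t s x y) : Rich G t s' x y := by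
  induction s with
  | zero => rw [Nat.le_zero.mp hs]; exact h
  | succ s ih =>
    rcases Nat.eq_or_lt_of_le hs with rfl | hlt
    · exact h
    · exact ih (by omega) (rich_succ_mono _ _ _ h)



section Tree
variable {t : ℕ} {T : SimpleGraph (Fin t)}

/-- In a tree, every path has length equal to the distance between its endpoints. -/
lemma tree_path_len (hT : T.IsTree) {y r : Fin t} (p : T.Walk y r) (hp : p.IsPath) :
    p.length = T.dist y r := by
  obtain ⟨w, hw⟩ := hT.isConnected.exists_walk_length_eq_dist y r
  have huniq := hT.IsAcyclic.path_unique ⟨p, hp⟩ ⟨w.bypass, w.bypass_isPath⟩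
  have hlen : p.length = w.bypass.length := congrArg (fun q : T.Path y r => q.1.length) huniq
  have h1 : w.bypass.length ≤ T.dist y r := hw ▸ w.length_bypass_le
  have h2 : T.dist y r ≤ p.length := SimpleGraph.dist_le p
  omega

/-- Interior vertices of a path to the root are strictly closer to the root. -/
lemma tree_support_dist (hT : T.IsTree) {y r : Fin t} (p : T.Walk y r) (hp : p.IsPath)
    {x : Fin t} (hx : x ∈ p.support) (hxy : x ≠ y) : T.dist x r < T.dist y r := by
  have hspec := p.take_spec hx
  have hlen : (p.takeUntil x hx).length + (p.dropUntil x hx).length = p.length := by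
    rw [← SimpleGraph.Walk.length_append, hspec]
  have h1 : T.dist x r ≤ (p.dropUntil x hx).length := SimpleGraph.dist_le _
  have h2 : 1 ≤ (p.takeUntil x hx).length := by
    by_contra h
    have h0 : (p.takeUntil x hx).length = 0 := by omega
    exact hxy (SimpleGraph.Walk.eq_of_length_eq_zero h0).symm
  have h3 : p.length = T.dist y r := tree_path_len hT p hp
  omega

/-- adjacent vertices have distances (to a fixed root) differing by one. -/
lemma tree_adj_dist (hT : T.IsTree) {r x y : Fin t} (hxy : T.Adj x y) :
    T.dist x r = T.dist y r + 1 ∨ T.dist y r = T.dist x r + 1 := by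
  -- wlog-type helper
  have key : ∀ a b : Fin t, T.Adj a b → T.dist b r ≤ T.dist a r →
      T.dist a r = T.dist b r + 1 := by
    intro a b hab hle
    obtain ⟨w, hw⟩ := hT.isConnected.exists_walk_length_eq_dist b r
    have hbp : w.bypass.IsPath := w.bypass_isPath
    have hbl : w.bypass.length = T.dist b r := tree_path_len hT _ hbp
    have hanotin : a ∉ w.bypass.support := by
      intro hmem
      have := tree_support_dist hT w.bypass hbp hmem hab.ne
      omega
    have hc : (SimpleGraph.Walk.cons hab w.bypass).IsPath :=
      (SimpleGraph.Walk.cons_isPath_iff _ _).2 ⟨hbp, hanotin⟩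
    have := tree_path_len hT _ hc
    simp only [SimpleGraph.Walk.length_cons] at this
    omega
  rcases le_total (T.dist y r) (T.dist x r) with h | h
  · exact Or.inl (key x y hxy h)
  · exact Or.inr (key y x hxy.symm h)

/-- uniqueness of the parent. -/
lemma tree_parent_unique (hT : T.IsTree) {r x y z : Fin t} (hxy : T.Adj x y) (hxz : T.Adj x z)
    (hy : T.dist y r + 1 = T.dist x r) (hz : T.dist z r + 1 = T.dist x r) : y = z := by
  obtain ⟨wy, hwy⟩ := hT.isConnected.exists_walk_length_eq_dist y r
  obtain ⟨wz, hwz⟩ := hT.isConnected.exists_walk_length_eq_dist z r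
  have hyp : wy.bypass.IsPath := wy.bypass_isPath
  have hzp : wz.bypass.IsPath := wz.bypass_isPath
  have hynotin : x ∉ wy.bypass.support := by
    intro hmem
    have := tree_support_dist hT wy.bypass hyp hmem hxy.ne
    omega
  have hznotin : x ∉ wz.bypass.support := by
    intro hmem
    have := tree_support_dist hT wz.bypass hzp hmem hxz.ne
    omega
  have hcy : (SimpleGraph.Walk.cons hxy wy.bypass).IsPath :=
    (SimpleGraph.Walk.cons_isPath_iff _ _).2 ⟨hyp, hynotin⟩
  have hcz : (SimpleGraph.Walk.cons hxz wz.bypass).IsPath :=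
    (SimpleGraph.Walk.cons_isPath_iff _ _).2 ⟨hzp, hznotin⟩
  have huniq := hT.IsAcyclic.path_unique ⟨_, hcy⟩ ⟨_, hcz⟩
  have := congrArg (fun q : T.Path x r => q.1.getVert 1) huniq
  simpa [SimpleGraph.Walk.getVert_cons_succ, SimpleGraph.Walk.getVert_zero] using this

/-- existence of the parent. -/
lemma tree_parent_exists (hT : T.IsTree) {r x : Fin t} (hx : x ≠ r) :
    ∃ y, T.Adj x y ∧ T.dist y r + 1 = T.dist x r := by
  obtain ⟨w, hw⟩ := hT.isConnected.exists_walk_length_eq_dist x r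
  have hpos : 0 < T.dist x r := hT.isConnected.pos_dist_of_ne hx
  cases w with
  | nil => simp at hw; omega
  | @cons _ y _ hadj q =>
    refine ⟨y, hadj, ?_⟩
    have h1 : T.dist y r ≤ q.length := SimpleGraph.dist_le q
    have h2 : q.length + 1 = T.dist x r := by
      simpa [SimpleGraph.Walk.length_cons] using hw
    rcases tree_adj_dist hT (r := r) hadj with h | h <;> omega

end Tree

section Embed
open scoped Classical

variable {t : ℕ}

/-- Partial embedding data of `K₂ □ T` into `G`. -/
structure PreEmb {n t : ℕ} (G : SimpleGraph (Fin n)) (T : SimpleGraph (Fin t))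
    (A B : Finset (Fin n)) (S : Finset (Fin t)) (U W : Fin t → Fin n) : Prop where
  hUA : ∀ x ∈ S, U x ∈ A
  hWB : ∀ x ∈ S, W x ∈ B
  hUinj : Set.InjOn U S
  hWinj : Set.InjOn W S
  rung : ∀ x ∈ S, G.Adj (U x) (W x)
  cross : ∀ x ∈ S, ∀ y ∈ S, T.Adj x y → G.Adj (U x) (W y)
  inv : ∀ x ∈ S, 2*t ≤ #((Nb G (W x)).filter fun z => Rich G t (t - #S) (U x) z)

lemma extend_emb {n t : ℕ} (ht : 2 ≤ t) {G : SimpleGraph (Fin n)} {T : SimpleGraph (Fin t)}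
    (hT : T.IsTree) {A B : Finset (Fin n)}
    (hA : ∀ v ∈ A, Nb G v ⊆ B) (hB : ∀ v ∈ B, Nb G v ⊆ A) (r : Fin t) :
    ∀ m : ℕ, ∀ S : Finset (Fin t), #S + m = t → r ∈ S →
      (∀ x ∈ S, ∀ y : Fin t, T.Adj x y → T.dist y r + 1 = T.dist x r → y ∈ S) →
      (∃ U W, PreEmb G T A B S U W) → ∃ U W, PreEmb G T A B univ U W := by
  intro m
  induction m with
  | zero =>
    intro S hcard _ _ hemb
    have : S = univ := Finset.eq_univ_of_card S (by simpa using hcard)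
    rwa [this] at hemb
  | succ m ih =>
    intro S hcard hrS hDC hemb
    obtain ⟨U, W, hPE⟩ := hemb
    set k := #S with hk
    have hklt : k < t := by omega
    -- pick the minimal-distance vertex outside S
    have hne : (univ \ S).Nonempty := by
      rw [← Finset.card_pos, Finset.card_sdiff_of_subset (Finset.subset_univ S)]
      simp only [Finset.card_univ, Fintype.card_fin]
      omega
    obtain ⟨ℓ, hℓmem, hmin⟩ := Finset.exists_min_image (univ \ S) (fun x => T.dist x r) hne
    have hℓS : ℓ ∉ S := (Finset.mem_sdiff.mp hℓmem).2
    have hℓr : ℓ ≠ r := fun h => hℓS (h ▸ hrS)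
    obtain ⟨p, hpadj, hpd⟩ := tree_parent_exists hT hℓr
    have hpS : p ∈ S := by
      by_contra hpnS
      have := hmin p (Finset.mem_sdiff.mpr ⟨Finset.mem_univ _, hpnS⟩)
      omega
    -- ℓ has exactly one T-neighbour in S, namely p
    have hnbr : ∀ y ∈ S, T.Adj ℓ y → y = p := by
      intro y hy hadj
      rcases tree_adj_dist hT (r := r) hadj with h | h
      · exact tree_parent_unique hT hadj hpadj (by omega) hpd
      · exact absurd (hDC y hy ℓ hadj.symm (by omega)) hℓS
    -- choose u_ℓ
    have hinvp := hPE.inv p hpS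
    rw [← hk] at hinvp
    have hcands : (((Nb G (W p)).filter fun z => Rich G t (t - k) (U p) z) \ S.image U).Nonempty := by
      rw [← Finset.card_pos]
      have h1 := Finset.le_card_sdiff (S.image U)
        ((Nb G (W p)).filter fun z => Rich G t (t - k) (U p) z)
      have h2 : #(S.image U) ≤ k := Finset.card_image_le
      omega
    obtain ⟨uℓ, hul⟩ := hcands
    rw [Finset.mem_sdiff, Finset.mem_filter] at hul
    obtain ⟨⟨hulNb, hulRich⟩, hulfresh⟩ := hul
    have hs : t - k = (t - (k+1)) + 1 := by omega
    rw [hs] at hulRich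
    -- choose w_ℓ
    have hwit := hulRich.2.2.1
    have hwcands : (((Nb G (U p) ∩ Nb G uℓ).filter (Wg G t (Rich G t (t - (k+1))) uℓ))
        \ S.image W).Nonempty := by
      rw [← Finset.card_pos]
      have h1 := Finset.le_card_sdiff (S.image W)
        ((Nb G (U p) ∩ Nb G uℓ).filter (Wg G t (Rich G t (t - (k+1))) uℓ))
      have h2 : #(S.image W) ≤ k := Finset.card_image_le
      omega
    obtain ⟨wℓ, hwl⟩ := hwcands
    rw [Finset.mem_sdiff, Finset.mem_filter, Finset.mem_inter] at hwl
    obtain ⟨⟨⟨hwlNUp, hwlNul⟩, hwlWg⟩, hwlfresh⟩ := hwl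
    -- the updated maps
    set U' := Function.update U ℓ uℓ with hU'
    set W' := Function.update W ℓ wℓ with hW'
    have hU'old : ∀ x ∈ S, U' x = U x := by
      intro x hx
      exact Function.update_of_ne (by rintro rfl; exact hℓS hx) _ _
    have hW'old : ∀ x ∈ S, W' x = W x := by
      intro x hx
      exact Function.update_of_ne (by rintro rfl; exact hℓS hx) _ _
    have hU'ℓ : U' ℓ = uℓ := Function.update_self _ _ _
    have hW'ℓ : W' ℓ = wℓ := Function.update_self _ _ _
    have hulA : uℓ ∈ A := hB _ (hPE.hWB p hpS) hulNb
    have hwlB : wℓ ∈ B := hA _ (hPE.hUA p hpS) hwlNUp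
    have hcardins : #(insert ℓ S) = k + 1 := by rw [Finset.card_insert_of_notMem hℓS]
    -- apply induction
    refine ih (insert ℓ S) (by omega) (Finset.mem_insert_of_mem hrS) ?_ ⟨U', W', ?_⟩
    · -- parent-closure
      intro x hx y hadj hdy
      rcases Finset.mem_insert.mp hx with rfl | hxS
      · have : y = p := tree_parent_unique hT hadj hpadj hdy hpd
        exact this ▸ Finset.mem_insert_of_mem hpS
      · exact Finset.mem_insert_of_mem (hDC x hxS y hadj hdy)
    constructor
    · intro x hx
      rcases Finset.mem_insert.mp hx with rfl | hxS
      · rwa [hU'ℓ]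
      · rw [hU'old x hxS]; exact hPE.hUA x hxS
    · intro x hx
      rcases Finset.mem_insert.mp hx with rfl | hxS
      · rwa [hW'ℓ]
      · rw [hW'old x hxS]; exact hPE.hWB x hxS
    · -- U' injective
      intro a ha b hb heq
      simp only [Finset.coe_insert, Set.mem_insert_iff, Finset.mem_coe] at ha hb
      rcases ha with rfl | haS <;> rcases hb with rfl | hbS
      · rfl
      · exfalso
        rw [hU'ℓ, hU'old b hbS] at heq
        exact hulfresh (heq ▸ Finset.mem_image_of_mem U hbS)
      · exfalso
        rw [hU'ℓ, hU'old a haS] at heq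
        exact hulfresh (heq ▸ Finset.mem_image_of_mem U haS)
      · rw [hU'old a haS, hU'old b hbS] at heq
        exact hPE.hUinj haS hbS heq
    · -- W' injective
      intro a ha b hb heq
      simp only [Finset.coe_insert, Set.mem_insert_iff, Finset.mem_coe] at ha hb
      rcases ha with rfl | haS <;> rcases hb with rfl | hbS
      · rfl
      · exfalso
        rw [hW'ℓ, hW'old b hbS] at heq
        exact hwlfresh (heq ▸ Finset.mem_image_of_mem W hbS)
      · exfalso
        rw [hW'ℓ, hW'old a haS] at heq
        exact hwlfresh (heq ▸ Finset.mem_image_of_mem W haS)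
      · rw [hW'old a haS, hW'old b hbS] at heq
        exact hPE.hWinj haS hbS heq
    · -- rungs
      intro x hx
      rcases Finset.mem_insert.mp hx with rfl | hxS
      · rw [hU'ℓ, hW'ℓ]
        exact mem_Nb.mp hwlNul
      · rw [hU'old x hxS, hW'old x hxS]
        exact hPE.rung x hxS
    · -- crosses
      intro x hx y hy hadj
      rcases Finset.mem_insert.mp hx with rfl | hxS <;>
        rcases Finset.mem_insert.mp hy with rfl | hyS
      · exact absurd hadj (T.irrefl)
      · have hyp : y = p := hnbr y hyS hadj
        subst hyp
        rw [hU'ℓ, hW'old y hyS]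
        exact (mem_Nb.mp hulNb).symm
      · have hxp : x = p := hnbr x hxS hadj.symm
        subst hxp
        rw [hU'old x hxS, hW'ℓ]
        exact mem_Nb.mp hwlNUp
      · rw [hU'old x hxS, hW'old y hyS]
        exact hPE.cross x hxS y hyS hadj
    · -- invariant
      intro x hx
      rw [hcardins]
      rcases Finset.mem_insert.mp hx with rfl | hxS
      · rw [hU'ℓ, hW'ℓ]
        exact hwlWg
      · rw [hU'old x hxS, hW'old x hxS]
        refine le_trans (hPE.inv x hxS) (card_le_card (monotone_filter_right _ ?_))
        intro z _ hz
        exact rich_mono (by omega) hz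

lemma embed_copy {n t : ℕ} (ht : 2 ≤ t) {G : SimpleGraph (Fin n)} {T : SimpleGraph (Fin t)}
    (hT : T.IsTree) {A B : Finset (Fin n)} (hdisj : ∀ v ∈ A, v ∉ B)
    (hA : ∀ v ∈ A, Nb G v ⊆ B) (hB : ∀ v ∈ B, Nb G v ⊆ A)
    {u u' : Fin n} (hu : u ∈ A) (hr : Rich G t t u u') :
    ContainsCopy ((⊤ : SimpleGraph (Fin 2)).boxProd T) G := by
  have htpos : 0 < t := by omega
  set r : Fin t := ⟨0, htpos⟩ with hrdef
  -- base: a single-vertex partial embedding at r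
  have hts : t = (t-1) + 1 := by omega
  have hr' : Rich G t ((t-1)+1) u u' := by rwa [← hts]
  have hwit := hr'.2.2.2
  have hwne : ((Nb G u ∩ Nb G u').filter (Wg G t (Rich G t (t-1)) u)).Nonempty := by
    rw [← Finset.card_pos]; omega
  obtain ⟨w₀, hw₀⟩ := hwne
  rw [Finset.mem_filter, Finset.mem_inter] at hw₀
  obtain ⟨⟨hw₀u, _⟩, hw₀Wg⟩ := hw₀
  have hbase : PreEmb G T A B {r} (fun _ => u) (fun _ => w₀) := by
    constructor
    · intro x _; exact hu
    · intro x _; exact hA u hu hw₀u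
    · intro a ha b hb _
      simp only [Finset.coe_singleton, Set.mem_singleton_iff] at ha hb
      rw [ha, hb]
    · intro a ha b hb _
      simp only [Finset.coe_singleton, Set.mem_singleton_iff] at ha hb
      rw [ha, hb]
    · intro x _; exact mem_Nb.mp hw₀u
    · intro x hx y hy hadj
      simp only [Finset.mem_singleton] at hx hy
      rw [hx, hy] at hadj
      exact absurd hadj (T.irrefl)
    · intro x _
      simpa [Wg] using hw₀Wg
  obtain ⟨U, W, hPE⟩ := extend_emb ht hT hA hB r (t-1) {r} (by simp; omega)
    (Finset.mem_singleton_self r)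
    (by
      intro x hx y hadj hdy
      simp only [Finset.mem_singleton] at hx
      subst hx
      rw [SimpleGraph.dist_self] at hdy
      omega)
    ⟨_, _, hbase⟩
  -- build the full embedding
  set prt : Fin t → Fin 2 := fun x => if Even (T.dist x r) then 0 else 1 with hprt
  have hflip : ∀ x y : Fin t, T.Adj x y → prt x ≠ prt y := by
    intro x y hadj heq
    have hiff : (Even (T.dist x r) ↔ ¬ Even (T.dist y r)) := by
      rcases tree_adj_dist hT (r := r) hadj with h | h
      · rw [h, Nat.even_add_one]
      · rw [h, Nat.even_add_one]; tauto
    simp only [hprt] at heq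
    by_cases h1 : Even (T.dist x r) <;> by_cases h2 : Even (T.dist y r)
    · exact (hiff.mp h1) h2
    · rw [if_pos h1, if_neg h2] at heq
      exact (by decide : (0:Fin 2) ≠ 1) heq
    · rw [if_neg h1, if_pos h2] at heq
      exact (by decide : (1:Fin 2) ≠ 0) heq
    · exact h1 (hiff.mpr h2)
  have hUuniv : ∀ x : Fin t, U x ∈ A := fun x => hPE.hUA x (Finset.mem_univ x)
  have hWuniv : ∀ x : Fin t, W x ∈ B := fun x => hPE.hWB x (Finset.mem_univ x)
  have hUWne : ∀ x y : Fin t, U x ≠ W y := by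
    intro x y h
    exact hdisj (U x) (hUuniv x) (h ▸ hWuniv y)
  have hfin2 : ∀ a b c : Fin 2, a ≠ c → b ≠ c → a = b := by decide
  refine ⟨fun q => if q.1 = prt q.2 then U q.2 else W q.2, ?_, ?_⟩
  · -- injectivity
    rintro ⟨i, x⟩ ⟨j, y⟩ h
    simp only at h
    split_ifs at h with h1 h2 h2
    · have hxy : x = y := hPE.hUinj (by simp) (by simp) h
      subst hxy
      rw [h1, h2]
    · exact absurd h (hUWne x y)
    · exact absurd h.symm (hUWne y x)
    · have hxy : x = y := hPE.hWinj (by simp) (by simp) h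
      subst hxy
      rw [hfin2 i j (prt x) h1 h2]
  · -- adjacency
    rintro ⟨i, x⟩ ⟨j, y⟩ hadj
    rcases SimpleGraph.boxProd_adj.mp hadj with ⟨hij, hxy⟩ | ⟨hTxy, hij⟩
    · -- same T-vertex, opposite sides
      simp only at hij hxy
      subst hxy
      rw [SimpleGraph.top_adj] at hij
      by_cases h1 : i = prt x
      · have h2 : ¬ (j = prt x) := fun h => hij (h1.trans h.symm)
        simp only [if_pos h1, if_neg h2]
        exact hPE.rung x (Finset.mem_univ x)
      · have h2 : j = prt x := hfin2 j (prt x) i (fun h => hij h.symm) (fun h => h1 h.symm)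
        simp only [if_pos h2, if_neg h1]
        exact (hPE.rung x (Finset.mem_univ x)).symm
    · -- T-edge, same side
      simp only at hTxy hij
      subst hij
      have hne : prt x ≠ prt y := hflip x y hTxy
      by_cases h1 : i = prt x
      · have h2 : ¬ (i = prt y) := fun h => hne (h1 ▸ h ▸ rfl)
        simp only [if_pos h1, if_neg h2]
        exact hPE.cross x (Finset.mem_univ x) y (Finset.mem_univ y)  hTxy
      · have h2 : i = prt y := hfin2 i (prt y) (prt x) h1 (fun h => hne h.symm)
        simp only [if_pos h2, if_neg h1]
        exact (hPE.cross y (Finset.mem_univ y) x (Finset.mem_univ x) hTxy.symm).symm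

end Embed

section Counting
open scoped Classical

variable {t : ℕ}

lemma sum_Nb_card (G : SimpleGraph (Fin n)) : ∑ v, #(Nb G v) = 2 * #G.edgeFinset := by
  have h : ∀ v, #(Nb G v) = G.degree v := by
    intro v
    rw [SimpleGraph.degree]
    congr 1
    ext x
    simp [Nb, SimpleGraph.mem_neighborFinset]
  simp_rw [h]
  exact SimpleGraph.sum_degrees_eq_twice_card_edges G

lemma sum_Nb_side (G : SimpleGraph (Fin n)) (A B : Finset (Fin n)) (hunion : A ∪ B = univ)
    (hdisj : Disjoint A B) (hB : ∀ v ∈ B, Nb G v ⊆ A) (hA : ∀ v ∈ A, Nb G v ⊆ B) :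
    ∑ v ∈ B, #(Nb G v) = #G.edgeFinset := by
  have hNbA : ∀ a ∈ A, Nb G a = B.filter (fun b => G.Adj a b) := by
    intro a ha
    ext x
    simp only [Finset.mem_filter, mem_Nb]
    exact ⟨fun h => ⟨hA a ha (mem_Nb.mpr h), h⟩, fun h => h.2⟩
  have hNbB : ∀ b ∈ B, Nb G b = A.filter (fun a => G.Adj b a) := by
    intro b hb
    ext x
    simp only [Finset.mem_filter, mem_Nb]
    exact ⟨fun h => ⟨hB b hb (mem_Nb.mpr h), h⟩, fun h => h.2⟩
  have hAB : ∑ v ∈ A, #(Nb G v) = ∑ v ∈ B, #(Nb G v) := by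
    calc ∑ v ∈ A, #(Nb G v) = ∑ a ∈ A, ∑ b ∈ B, if G.Adj a b then 1 else 0 := by
          refine Finset.sum_congr rfl (fun a ha => ?_)
          rw [hNbA a ha, Finset.card_filter]
      _ = ∑ b ∈ B, ∑ a ∈ A, if G.Adj a b then 1 else 0 := Finset.sum_comm
      _ = ∑ v ∈ B, #(Nb G v) := by
          refine Finset.sum_congr rfl (fun b hb => ?_)
          rw [hNbB b hb, Finset.card_filter]
          refine Finset.sum_congr rfl (fun a _ => ?_)
          rw [adj_comm]
  have htot : ∑ v ∈ A, #(Nb G v) + ∑ v ∈ B, #(Nb G v) = 2 * #G.edgeFinset := by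
    rw [← Finset.sum_union hdisj, hunion, sum_Nb_card]
  omega

lemma cherry_eq (G : SimpleGraph (Fin n)) (A B : Finset (Fin n))
    (hA : ∀ v ∈ A, Nb G v ⊆ B) (hB : ∀ v ∈ B, Nb G v ⊆ A) :
    ∑ w ∈ B, (#(Nb G w) * (#(Nb G w) - 1)) = ∑ p ∈ A.offDiag, codeg G p.1 p.2 := by
  have hsq : ∀ d : ℕ, d * (d - 1) = d * d - d := by
    intro d
    cases d with
    | zero => simp
    | succ k => rw [Nat.succ_sub_one]; ring_nf; omega
  calc ∑ w ∈ B, (#(Nb G w) * (#(Nb G w) - 1))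
      = ∑ w ∈ B, #((Nb G w).offDiag) := by
        refine Finset.sum_congr rfl (fun w _ => ?_)
        rw [Finset.offDiag_card, hsq]
    _ = ∑ w ∈ B, ∑ p ∈ A.offDiag, (if w ∈ Nb G p.1 ∧ w ∈ Nb G p.2 then 1 else 0) := by
        refine Finset.sum_congr rfl (fun w hw => ?_)
        have h2 : (Nb G w).offDiag
            = A.offDiag.filter (fun p => w ∈ Nb G p.1 ∧ w ∈ Nb G p.2) := by
          ext ⟨x, y⟩
          simp only [Finset.mem_offDiag, Finset.mem_filter]
          constructor
          · rintro ⟨hx, hy, hne⟩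
            exact ⟨⟨hB w hw hx, hB w hw hy, hne⟩, Nb_comm.mp hx, Nb_comm.mp hy⟩
          · rintro ⟨⟨_, _, hne⟩, hx, hy⟩
            exact ⟨Nb_comm.mp hx, Nb_comm.mp hy, hne⟩
        rw [h2, Finset.card_filter]
    _ = ∑ p ∈ A.offDiag, ∑ w ∈ B, (if w ∈ Nb G p.1 ∧ w ∈ Nb G p.2 then 1 else 0) :=
        Finset.sum_comm
    _ = ∑ p ∈ A.offDiag, codeg G p.1 p.2 := by
        refine Finset.sum_congr rfl (fun p hp => ?_)
        rw [← Finset.card_filter]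
        congr 1
        ext w
        simp only [Finset.mem_filter, Finset.mem_inter, codeg]
        constructor
        · rintro ⟨_, h1, h2⟩; exact ⟨h1, h2⟩
        · rintro ⟨h1, h2⟩
          exact ⟨hA p.1 (Finset.mem_offDiag.mp hp).1 h1, h1, h2⟩

lemma poor_tri (G : SimpleGraph (Fin n)) (t s : ℕ) (Q : Finset (Fin n × Fin n))
    (hQ : ∀ p ∈ Q, Rich G t s p.1 p.2) :
    ∑ p ∈ Q, #((Nb G p.1 ∩ Nb G p.2).filter (fun w => ¬ Wg G t (Rich G t s) p.2 w))
      ≤ 2*t * (2 * #G.edgeFinset) := by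
  -- rewrite each filter card as a sum of indicators over univ
  have hstep1 : ∀ p ∈ Q,
      #((Nb G p.1 ∩ Nb G p.2).filter (fun w => ¬ Wg G t (Rich G t s) p.2 w))
      = ∑ w : Fin n, (if w ∈ Nb G p.1 ∧ w ∈ Nb G p.2 ∧ ¬ Wg G t (Rich G t s) p.2 w
          then 1 else 0) := by
    intro p _
    rw [← Finset.card_filter]
    congr 1
    ext w
    simp only [Finset.mem_filter, Finset.mem_inter, Finset.mem_univ, true_and]
    tauto
  rw [Finset.sum_congr rfl hstep1, Finset.sum_comm]
  -- now for each w, group the pairs p by their second coordinate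
  have hstep2 : ∀ w : Fin n,
      ∑ p ∈ Q, (if w ∈ Nb G p.1 ∧ w ∈ Nb G p.2 ∧ ¬ Wg G t (Rich G t s) p.2 w then 1 else 0)
      ≤ ∑ y : Fin n, (if w ∈ Nb G y then 2*t else 0) := by
    intro w
    have hfib : ∑ p ∈ Q, (if w ∈ Nb G p.1 ∧ w ∈ Nb G p.2 ∧ ¬ Wg G t (Rich G t s) p.2 w
        then 1 else 0)
        = #(Q.filter (fun p => w ∈ Nb G p.1 ∧ w ∈ Nb G p.2 ∧ ¬ Wg G t (Rich G t s) p.2 w)) :=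
      (Finset.card_filter _ _).symm
    rw [hfib]
    set Q' := Q.filter (fun p => w ∈ Nb G p.1 ∧ w ∈ Nb G p.2 ∧ ¬ Wg G t (Rich G t s) p.2 w)
      with hQ'
    have hmaps : ∀ p ∈ Q', p.2 ∈ (univ : Finset (Fin n)) := fun p _ => Finset.mem_univ _
    rw [Finset.card_eq_sum_card_fiberwise hmaps]
    refine Finset.sum_le_sum (fun y _ => ?_)
    by_cases hne : (Q'.filter (fun p => p.2 = y)).Nonempty
    · obtain ⟨p₀, hp₀⟩ := hne
      rw [Finset.mem_filter] at hp₀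
      obtain ⟨hp₀Q', hp₀y⟩ := hp₀
      rw [hQ', Finset.mem_filter] at hp₀Q'
      obtain ⟨hp₀Q, _, hwNb2, hnWg⟩ := hp₀Q'
      rw [hp₀y] at hwNb2 hnWg
      rw [if_pos hwNb2]
      -- fiber injects into (Nb w).filter (Rich s y ·)
      have hinj : #(Q'.filter (fun p => p.2 = y)) ≤ #((Nb G w).filter (fun x => Rich G t s y x)) := by
        refine Finset.card_le_card_of_injOn (fun p => p.1) ?_ ?_
        · intro p hp
          rw [Finset.mem_coe, Finset.mem_filter] at hp
          obtain ⟨hpQ', hpy⟩ := hp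
          rw [hQ', Finset.mem_filter] at hpQ'
          obtain ⟨hpQ, hw1, _, _⟩ := hpQ'
          rw [Finset.mem_coe, Finset.mem_filter]
          refine ⟨Nb_comm.mp hw1, ?_⟩
          have := rich_symm (hQ p hpQ)
          rwa [hpy] at this
        · intro p hp q hq heq
          rw [Finset.mem_coe, Finset.mem_filter] at hp hq
          exact Prod.ext heq (hp.2.trans hq.2.symm)
      have hlt : #((Nb G w).filter (fun x => Rich G t s y x)) < 2*t := by
        by_contra hge
        exact hnWg (le_of_not_gt hge)
      omega
    · rw [Finset.not_nonempty_iff_eq_empty] at hne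
      rw [hne]
      simp only [Finset.card_empty]
      split <;> omega
  calc ∑ w : Fin n, ∑ p ∈ Q,
        (if w ∈ Nb G p.1 ∧ w ∈ Nb G p.2 ∧ ¬ Wg G t (Rich G t s) p.2 w then 1 else 0)
      ≤ ∑ w : Fin n, ∑ y : Fin n, (if w ∈ Nb G y then 2*t else 0) :=
        Finset.sum_le_sum (fun w _ => hstep2 w)
    _ = ∑ y : Fin n, ∑ w : Fin n, (if w ∈ Nb G y then 2*t else 0) := Finset.sum_comm
    _ = ∑ y : Fin n, 2*t * #(Nb G y) := by
        refine Finset.sum_congr rfl (fun y _ => ?_)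
        rw [Finset.sum_ite, Finset.sum_const_zero, add_zero, Finset.sum_const,
          Finset.filter_univ_mem, smul_eq_mul, mul_comm]
    _ = 2*t * (2 * #G.edgeFinset) := by
        rw [← Finset.mul_sum, sum_Nb_card]

lemma poor_tri1 (G : SimpleGraph (Fin n)) (t s : ℕ) (Q : Finset (Fin n × Fin n))
    (hQ : ∀ p ∈ Q, Rich G t s p.1 p.2) :
    ∑ p ∈ Q, #((Nb G p.1 ∩ Nb G p.2).filter (fun w => ¬ Wg G t (Rich G t s) p.1 w))
      ≤ 2*t * (2 * #G.edgeFinset) := by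
  have hstep1 : ∀ p ∈ Q,
      #((Nb G p.1 ∩ Nb G p.2).filter (fun w => ¬ Wg G t (Rich G t s) p.1 w))
      = ∑ w : Fin n, (if w ∈ Nb G p.1 ∧ w ∈ Nb G p.2 ∧ ¬ Wg G t (Rich G t s) p.1 w
          then 1 else 0) := by
    intro p _
    rw [← Finset.card_filter]
    congr 1
    ext w
    simp only [Finset.mem_filter, Finset.mem_inter, Finset.mem_univ, true_and]
    tauto
  rw [Finset.sum_congr rfl hstep1, Finset.sum_comm]
  have hstep2 : ∀ w : Fin n,
      ∑ p ∈ Q, (if w ∈ Nb G p.1 ∧ w ∈ Nb G p.2 ∧ ¬ Wg G t (Rich G t s) p.1 w then 1 else 0)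
      ≤ ∑ y : Fin n, (if w ∈ Nb G y then 2*t else 0) := by
    intro w
    have hfib : ∑ p ∈ Q, (if w ∈ Nb G p.1 ∧ w ∈ Nb G p.2 ∧ ¬ Wg G t (Rich G t s) p.1 w
        then 1 else 0)
        = #(Q.filter (fun p => w ∈ Nb G p.1 ∧ w ∈ Nb G p.2 ∧ ¬ Wg G t (Rich G t s) p.1 w)) :=
      (Finset.card_filter _ _).symm
    rw [hfib]
    set Q' := Q.filter (fun p => w ∈ Nb G p.1 ∧ w ∈ Nb G p.2 ∧ ¬ Wg G t (Rich G t s) p.1 w)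
      with hQ'
    have hmaps : ∀ p ∈ Q', p.1 ∈ (univ : Finset (Fin n)) := fun p _ => Finset.mem_univ _
    rw [Finset.card_eq_sum_card_fiberwise hmaps]
    refine Finset.sum_le_sum (fun y _ => ?_)
    by_cases hne : (Q'.filter (fun p => p.1 = y)).Nonempty
    · obtain ⟨p₀, hp₀⟩ := hne
      rw [Finset.mem_filter] at hp₀
      obtain ⟨hp₀Q', hp₀y⟩ := hp₀
      rw [hQ', Finset.mem_filter] at hp₀Q'
      obtain ⟨hp₀Q, hwNb1, _, hnWg⟩ := hp₀Q'
      rw [hp₀y] at hwNb1 hnWg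
      rw [if_pos hwNb1]
      have hinj : #(Q'.filter (fun p => p.1 = y))
          ≤ #((Nb G w).filter (fun x => Rich G t s y x)) := by
        refine Finset.card_le_card_of_injOn (fun p => p.2) ?_ ?_
        · intro p hp
          rw [Finset.mem_coe, Finset.mem_filter] at hp
          obtain ⟨hpQ', hpy⟩ := hp
          rw [hQ', Finset.mem_filter] at hpQ'
          obtain ⟨hpQ, _, hw2, _⟩ := hpQ'
          rw [Finset.mem_coe, Finset.mem_filter]
          refine ⟨Nb_comm.mp hw2, ?_⟩
          have := hQ p hpQ
          rwa [hpy] at this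
        · intro p hp q hq heq
          rw [Finset.mem_coe, Finset.mem_filter] at hp hq
          exact Prod.ext (hp.2.trans hq.2.symm) heq
      have hlt : #((Nb G w).filter (fun x => Rich G t s y x)) < 2*t := by
        by_contra hge
        exact hnWg (le_of_not_gt hge)
      omega
    · rw [Finset.not_nonempty_iff_eq_empty] at hne
      rw [hne]
      simp only [Finset.card_empty]
      split <;> omega
  calc ∑ w : Fin n, ∑ p ∈ Q,
        (if w ∈ Nb G p.1 ∧ w ∈ Nb G p.2 ∧ ¬ Wg G t (Rich G t s) p.1 w then 1 else 0)
      ≤ ∑ w : Fin n, ∑ y : Fin n, (if w ∈ Nb G y then 2*t else 0) :=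
        Finset.sum_le_sum (fun w _ => hstep2 w)
    _ = ∑ y : Fin n, ∑ w : Fin n, (if w ∈ Nb G y then 2*t else 0) := Finset.sum_comm
    _ = ∑ y : Fin n, 2*t * #(Nb G y) := by
        refine Finset.sum_congr rfl (fun y _ => ?_)
        rw [Finset.sum_ite, Finset.sum_const_zero, add_zero, Finset.sum_const,
          Finset.filter_univ_mem, smul_eq_mul, mul_comm]
    _ = 2*t * (2 * #G.edgeFinset) := by
        rw [← Finset.mul_sum, sum_Nb_card]

lemma count2 (ht : 2 ≤ t) (G : SimpleGraph (Fin n)) (A : Finset (Fin n))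
    (hnorich : ∀ x y : Fin n, ¬ Rich G t t x y) :
    ∑ p ∈ A.offDiag, codeg G p.1 p.2
      ≤ (t-1) * #A.offDiag + 8 * t^3 * #G.edgeFinset := by
  set e := #G.edgeFinset with he
  set P := A.offDiag.filter (fun p => t ≤ codeg G p.1 p.2) with hP
  -- the death level
  have hex : ∀ p : Fin n × Fin n, ∃ s, ¬ Rich G t s p.1 p.2 := fun p => ⟨t, hnorich _ _⟩
  set lv : Fin n × Fin n → ℕ := fun p => Nat.find (hex p) with hlv
  have hlv_le : ∀ p, lv p ≤ t := fun p => Nat.find_le (hnorich _ _)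
  have hlv_spec : ∀ p : Fin n × Fin n, ¬ Rich G t (lv p) p.1 p.2 :=
    fun p => Nat.find_spec (hex p)
  have hlv_min : ∀ p : Fin n × Fin n, ∀ m, m < lv p → Rich G t m p.1 p.2 := by
    intro p m hm
    have := Nat.find_min (hex p) (show m < Nat.find (hex p) from hm)
    rwa [not_not] at this
  have hlv_pos : ∀ p ∈ P, 1 ≤ lv p := by
    intro p hp
    rw [hP, Finset.mem_filter, Finset.mem_offDiag] at hp
    by_contra h
    have h0 : lv p = 0 := by omega
    have hspec := hlv_spec p
    rw [h0] at hspec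
    exact hspec ⟨hp.1.2.2, hp.2⟩
  have hlv_rich : ∀ p ∈ P, Rich G t (lv p - 1) p.1 p.2 := by
    intro p hp
    have h1 := hlv_pos p hp
    exact hlv_min p _ (by omega)
  have hlv_not : ∀ p ∈ P, ¬ Rich G t ((lv p - 1) + 1) p.1 p.2 := by
    intro p hp
    have h1 := hlv_pos p hp
    have h2 : (lv p - 1) + 1 = lv p := by omega
    rw [h2]
    exact hlv_spec p
  -- pointwise bound for pairs in P
  have key : ∀ p ∈ P, codeg G p.1 p.2 ≤ (t-1)
      + #((Nb G p.1 ∩ Nb G p.2).filter (fun w => ¬ Wg G t (Rich G t (lv p - 1)) p.2 w))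
      + #((Nb G p.1 ∩ Nb G p.2).filter (fun w => ¬ Wg G t (Rich G t (lv p - 1)) p.1 w)) := by
    intro p hp
    have hmem := hp
    rw [hP, Finset.mem_filter, Finset.mem_offDiag] at hmem
    obtain ⟨⟨_, _, hne⟩, hcod⟩ := hmem
    have hnot := hlv_not p hp
    have hsplit2 : #((Nb G p.1 ∩ Nb G p.2).filter (Wg G t (Rich G t (lv p - 1)) p.2))
        + #((Nb G p.1 ∩ Nb G p.2).filter (fun w => ¬ Wg G t (Rich G t (lv p - 1)) p.2 w))
        = codeg G p.1 p.2 := Finset.card_filter_add_card_filter_not _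
    have hsplit1 : #((Nb G p.1 ∩ Nb G p.2).filter (Wg G t (Rich G t (lv p - 1)) p.1))
        + #((Nb G p.1 ∩ Nb G p.2).filter (fun w => ¬ Wg G t (Rich G t (lv p - 1)) p.1 w))
        = codeg G p.1 p.2 := Finset.card_filter_add_card_filter_not _
    by_contra hcon
    apply hnot
    refine ⟨hne, hcod, ?_, ?_⟩ <;> omega
  have hsum : ∑ p ∈ P, codeg G p.1 p.2 ≤ (t-1) * #P
      + (∑ p ∈ P, #((Nb G p.1 ∩ Nb G p.2).filter (fun w => ¬ Wg G t (Rich G t (lv p - 1)) p.2 w)))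
      + (∑ p ∈ P, #((Nb G p.1 ∩ Nb G p.2).filter
          (fun w => ¬ Wg G t (Rich G t (lv p - 1)) p.1 w))) := by
    calc ∑ p ∈ P, codeg G p.1 p.2
        ≤ ∑ p ∈ P, ((t-1)
          + #((Nb G p.1 ∩ Nb G p.2).filter (fun w => ¬ Wg G t (Rich G t (lv p - 1)) p.2 w))
          + #((Nb G p.1 ∩ Nb G p.2).filter (fun w => ¬ Wg G t (Rich G t (lv p - 1)) p.1 w))) :=
          Finset.sum_le_sum key
      _ = _ := by rw [Finset.sum_add_distrib, Finset.sum_add_distrib, Finset.sum_const,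
            smul_eq_mul, mul_comm]
  -- bound the two "poor" sums via the fixed-level triple bound
  have hpoor2 : ∑ p ∈ P, #((Nb G p.1 ∩ Nb G p.2).filter
      (fun w => ¬ Wg G t (Rich G t (lv p - 1)) p.2 w)) ≤ t * (2*t * (2 * e)) := by
    have hmaps : ∀ p ∈ P, lv p - 1 ∈ Finset.range t := by
      intro p hp
      rw [Finset.mem_range]
      have := hlv_le p
      have := hlv_pos p hp
      omega
    rw [← Finset.sum_fiberwise_of_maps_to hmaps]
    calc ∑ s ∈ Finset.range t, ∑ p ∈ P.filter (fun p => lv p - 1 = s),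
          #((Nb G p.1 ∩ Nb G p.2).filter (fun w => ¬ Wg G t (Rich G t (lv p - 1)) p.2 w))
        ≤ ∑ s ∈ Finset.range t, (2*t * (2 * e)) := by
          refine Finset.sum_le_sum (fun s _ => ?_)
          have hcong : ∀ p ∈ P.filter (fun p => lv p - 1 = s),
              #((Nb G p.1 ∩ Nb G p.2).filter (fun w => ¬ Wg G t (Rich G t (lv p - 1)) p.2 w))
              = #((Nb G p.1 ∩ Nb G p.2).filter (fun w => ¬ Wg G t (Rich G t s) p.2 w)) := by
            intro p hp
            rw [Finset.mem_filter] at hp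
            rw [hp.2]
          rw [Finset.sum_congr rfl hcong]
          refine poor_tri G t s _ (fun p hp => ?_)
          rw [Finset.mem_filter] at hp
          have := hlv_rich p hp.1
          rwa [hp.2] at this
      _ = t * (2*t * (2 * e)) := by rw [Finset.sum_const, Finset.card_range, smul_eq_mul]
  have hpoor1 : ∑ p ∈ P, #((Nb G p.1 ∩ Nb G p.2).filter
      (fun w => ¬ Wg G t (Rich G t (lv p - 1)) p.1 w)) ≤ t * (2*t * (2 * e)) := by
    have hmaps : ∀ p ∈ P, lv p - 1 ∈ Finset.range t := by
      intro p hp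
      rw [Finset.mem_range]
      have := hlv_le p
      have := hlv_pos p hp
      omega
    rw [← Finset.sum_fiberwise_of_maps_to hmaps]
    calc ∑ s ∈ Finset.range t, ∑ p ∈ P.filter (fun p => lv p - 1 = s),
          #((Nb G p.1 ∩ Nb G p.2).filter (fun w => ¬ Wg G t (Rich G t (lv p - 1)) p.1 w))
        ≤ ∑ s ∈ Finset.range t, (2*t * (2 * e)) := by
          refine Finset.sum_le_sum (fun s _ => ?_)
          have hcong : ∀ p ∈ P.filter (fun p => lv p - 1 = s),
              #((Nb G p.1 ∩ Nb G p.2).filter (fun w => ¬ Wg G t (Rich G t (lv p - 1)) p.1 w))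
              = #((Nb G p.1 ∩ Nb G p.2).filter (fun w => ¬ Wg G t (Rich G t s) p.1 w)) := by
            intro p hp
            rw [Finset.mem_filter] at hp
            rw [hp.2]
          rw [Finset.sum_congr rfl hcong]
          refine poor_tri1 G t s _ (fun p hp => ?_)
          rw [Finset.mem_filter] at hp
          have := hlv_rich p hp.1
          rwa [hp.2] at this
      _ = t * (2*t * (2 * e)) := by rw [Finset.sum_const, Finset.card_range, smul_eq_mul]
  -- every pair in P has codegree at least t
  have hPlow : t * #P ≤ ∑ p ∈ P, codeg G p.1 p.2 := by
    calc t * #P = ∑ _p ∈ P, t := by rw [Finset.sum_const, smul_eq_mul, mul_comm]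
      _ ≤ ∑ p ∈ P, codeg G p.1 p.2 := by
          refine Finset.sum_le_sum (fun p hp => ?_)
          rw [hP, Finset.mem_filter] at hp
          exact hp.2
  -- conclude the bound on the sum over P
  have hPbound : ∑ p ∈ P, codeg G p.1 p.2 ≤ 8 * t^3 * e := by
    set X := ∑ p ∈ P, codeg G p.1 p.2 with hX
    have h1 : X ≤ (t-1) * #P + 4*t^2*e + 4*t^2*e := by
      have : t * (2*t*(2*e)) = 4*t^2*e := by ring
      rw [this] at hpoor2 hpoor1
      omega
    have h2 : t * X ≤ t * ((t-1) * #P + 4*t^2*e + 4*t^2*e) := Nat.mul_le_mul_left t h1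
    have h3 : t * ((t-1) * #P) = (t-1) * (t * #P) := by ring
    have h4 : (t-1) * (t * #P) ≤ (t-1) * X := Nat.mul_le_mul_left _ hPlow
    have h5 : t * X = (t-1) * X + X := by
      have ht1 : t = (t-1) + 1 := by omega
      calc t * X = ((t-1) + 1) * X := by rw [← ht1]
        _ = (t-1) * X + X := by ring
    have h6 : t * (4*t^2*e) = 4*t^3*e := by ring
    -- combine
    have h7 : (t-1) * X + X ≤ (t-1) * X + 4*t^3*e + 4*t^3*e := by
      calc (t-1) * X + X = t * X := h5.symm
        _ ≤ t * ((t-1) * #P + 4*t^2*e + 4*t^2*e) := h2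
        _ = (t-1) * (t * #P) + 4*t^3*e + 4*t^3*e := by rw [Nat.mul_add, Nat.mul_add, h3, h6]
        _ ≤ (t-1) * X + 4*t^3*e + 4*t^3*e := by
            have := h4
            omega
    have h8 : 4*t^3*e + 4*t^3*e = 8*t^3*e := by ring
    omega
  -- finally, split the whole sum
  have hsplit := Finset.sum_filter_add_sum_filter_not A.offDiag
    (fun p => t ≤ codeg G p.1 p.2) (fun p => codeg G p.1 p.2)
  rw [← hP] at hsplit
  have hlow : ∑ p ∈ A.offDiag.filter (fun p => ¬ t ≤ codeg G p.1 p.2), codeg G p.1 p.2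
      ≤ (t-1) * #A.offDiag := by
    calc ∑ p ∈ A.offDiag.filter (fun p => ¬ t ≤ codeg G p.1 p.2), codeg G p.1 p.2
        ≤ ∑ _p ∈ A.offDiag.filter (fun p => ¬ t ≤ codeg G p.1 p.2), (t-1) := by
          refine Finset.sum_le_sum (fun p hp => ?_)
          rw [Finset.mem_filter] at hp
          omega
      _ = #(A.offDiag.filter (fun p => ¬ t ≤ codeg G p.1 p.2)) * (t-1) := by
          rw [Finset.sum_const, smul_eq_mul]
      _ ≤ #A.offDiag * (t-1) := by
          exact Nat.mul_le_mul_right _ (Finset.card_le_card (Finset.filter_subset _ _))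
      _ = (t-1) * #A.offDiag := mul_comm _ _
  omega

end Counting


section Side
open scoped Classical

variable {n t : ℕ}

lemma side_sq (ht : 2 ≤ t) (G : SimpleGraph (Fin n)) (A B : Finset (Fin n))
    (hunion : A ∪ B = univ) (hdisj : Disjoint A B)
    (hA : ∀ v ∈ A, Nb G v ⊆ B) (hB : ∀ v ∈ B, Nb G v ⊆ A)
    (hnorich : ∀ x y : Fin n, ¬ Rich G t t x y) :
    ((#G.edgeFinset : ℝ))^2
      ≤ (#B : ℝ) * (((t:ℝ)-1) * (#A:ℝ)^2 + (8*(t:ℝ)^3+1) * (#G.edgeFinset:ℝ)) := by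
  have hdeg : ∑ v ∈ B, #(Nb G v) = #G.edgeFinset := sum_Nb_side G A B hunion hdisj hB hA
  have hCS : ((#G.edgeFinset : ℕ) : ℝ)^2 ≤ (#B : ℝ) * ((∑ v ∈ B, (#(Nb G v))^2 : ℕ) : ℝ) := by
    rw [← hdeg]
    push_cast
    exact sq_sum_le_card_mul_sum_sq
  have hsq : ∑ v ∈ B, (#(Nb G v))^2 ≤ (t-1) * #A^2 + (8*t^3+1) * #G.edgeFinset := by
    have hid : ∀ d : ℕ, d^2 = d*(d-1) + d := by
      intro d
      cases d with
      | zero => simp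
      | succ k => rw [Nat.succ_sub_one]; ring
    have hsum : ∑ v ∈ B, (#(Nb G v))^2
        = ∑ v ∈ B, (#(Nb G v) * (#(Nb G v) - 1)) + ∑ v ∈ B, #(Nb G v) := by
      rw [← Finset.sum_add_distrib]
      exact Finset.sum_congr rfl (fun v _ => hid _)
    rw [hsum, cherry_eq G A B hA hB, hdeg]
    have hc2 := count2 ht G A hnorich
    have hoff : #A.offDiag ≤ #A^2 := by
      rw [Finset.offDiag_card]
      have : #A * #A = #A^2 := by ring
      omega
    have h1 : (t-1) * #A.offDiag ≤ (t-1) * #A^2 := Nat.mul_le_mul_left _ hoff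
    have h2 : 8*t^3*#G.edgeFinset + #G.edgeFinset = (8*t^3+1) * #G.edgeFinset := by ring
    omega
  calc ((#G.edgeFinset : ℝ))^2 ≤ (#B : ℝ) * ((∑ v ∈ B, (#(Nb G v))^2 : ℕ) : ℝ) := hCS
    _ ≤ (#B : ℝ) * (((t-1) * #A^2 + (8*t^3+1) * #G.edgeFinset : ℕ) : ℝ) := by
        have hBpos : (0:ℝ) ≤ (#B : ℝ) := by positivity
        refine mul_le_mul_of_nonneg_left ?_ hBpos
        exact_mod_cast hsq
    _ = (#B : ℝ) * (((t:ℝ)-1) * (#A:ℝ)^2 + (8*(t:ℝ)^3+1) * (#G.edgeFinset:ℝ)) := by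
        congr 1
        push_cast [Nat.cast_sub (by omega : 1 ≤ t)]
        ring

end Side

set_option maxHeartbeats 1000000 in
theorem ex_bip_K2_tree_upper (t : ℕ) (ht : 2 ≤ t) (T : SimpleGraph (Fin t)) (hT : T.IsTree)
    (ε : ℝ) (hε : 0 < ε) :
    ∃ N : ℕ, ∀ n : ℕ, N ≤ n → ∀ G : SimpleGraph (Fin n), G.Colorable 2 →
      ¬ ContainsCopy ((⊤ : SimpleGraph (Fin 2)).boxProd T) G →
      (G.edgeSet.ncard : ℝ)
        ≤ (Real.sqrt ((t : ℝ) - 1) / (2 * Real.sqrt 2) + ε) * (n : ℝ) ^ (3/2 : ℝ) := by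
  refine ⟨⌈(9*(t:ℝ)^3/ε)^2⌉₊ + 1, ?_⟩
  intro n hn G hcol hfree
  obtain ⟨C⟩ := hcol
  set A : Finset (Fin n) := univ.filter (fun v => C v = 0) with hA_def
  set B : Finset (Fin n) := univ.filter (fun v => C v = 1) with hB_def
  have hfin2 : ∀ i : Fin 2, i = 0 ∨ i = 1 := by decide
  have hunion : A ∪ B = univ := by
    ext v
    simp only [hA_def, hB_def, Finset.mem_union, Finset.mem_filter, Finset.mem_univ, true_and,
      iff_true]
    exact hfin2 (C v)
  have hdisj : Disjoint A B := by
    rw [Finset.disjoint_left]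
    intro v hv hv'
    simp only [hA_def, hB_def, Finset.mem_filter, Finset.mem_univ, true_and] at hv hv'
    rw [hv] at hv'
    exact (by decide : ¬ ((0 : Fin 2) = 1)) hv'
  have hAB : ∀ v ∈ A, Nb G v ⊆ B := by
    intro v hv x hx
    simp only [hA_def, Finset.mem_filter, Finset.mem_univ, true_and] at hv
    simp only [hB_def, Finset.mem_filter, Finset.mem_univ, true_and]
    have hadj := mem_Nb.mp hx
    have hne := C.valid hadj
    rw [hv] at hne
    rcases hfin2 (C x) with h | h
    · exact absurd h.symm hne
    · exact h
  have hBA : ∀ v ∈ B, Nb G v ⊆ A := by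
    intro v hv x hx
    simp only [hB_def, Finset.mem_filter, Finset.mem_univ, true_and] at hv
    simp only [hA_def, Finset.mem_filter, Finset.mem_univ, true_and]
    have hadj := mem_Nb.mp hx
    have hne := C.valid hadj
    rw [hv] at hne
    rcases hfin2 (C x) with h | h
    · exact h
    · exact absurd h.symm hne
  have hnorich : ∀ x y : Fin n, ¬ Rich G t t x y := by
    intro x y hr
    have hx : x ∈ A ∪ B := hunion ▸ Finset.mem_univ x
    rcases Finset.mem_union.mp hx with hxA | hxB
    · exact hfree (embed_copy ht hT (fun v hv hv' => Finset.disjoint_left.mp hdisj hv hv')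
        hAB hBA hxA hr)
    · exact hfree (embed_copy ht hT (fun v hv hv' => Finset.disjoint_left.mp hdisj hv' hv)
        hBA hAB hxB hr)
  have h1 := side_sq ht G A B hunion hdisj hAB hBA hnorich
  have h2 := side_sq ht G B A (by rwa [Finset.union_comm]) hdisj.symm hBA hAB hnorich
  set E : ℝ := (#G.edgeFinset : ℝ) with hE_def
  have hEncard : (G.edgeSet.ncard : ℝ) = E := by
    rw [hE_def]
    congr 1
    rw [← Set.ncard_coe_finset G.edgeFinset, SimpleGraph.coe_edgeFinset]
  set a : ℝ := (#A : ℝ) with ha_def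
  set b : ℝ := (#B : ℝ) with hb_def
  have hab : a + b = n := by
    rw [ha_def, hb_def, ← Nat.cast_add]
    congr 1
    rw [← Finset.card_union_of_disjoint hdisj, hunion, Finset.card_univ, Fintype.card_fin]
  have hE0 : 0 ≤ E := by positivity
  have ha0 : (0:ℝ) ≤ a := by positivity
  have hb0 : (0:ℝ) ≤ b := by positivity
  have hn1 : 1 ≤ n := by omega
  have hnR : (1:ℝ) ≤ n := by exact_mod_cast hn1
  have ht1R : (1:ℝ) ≤ t := by exact_mod_cast (by omega : 1 ≤ t)
  have hquad : E^2 ≤ ((t:ℝ)-1) * (n:ℝ)^3/8 + (9*(t:ℝ)^3*n) * E := by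
    have hcoef : (8*(t:ℝ)^3+1) ≤ 9*(t:ℝ)^3 := by nlinarith [one_le_pow₀ ht1R (n := 3)]
    rcases le_total a b with hle | hle
    · have h2a : 2*a ≤ n := by linarith
      have hmb : b ≤ n := by linarith
      have hcube : a^2*(n-a) ≤ (n:ℝ)^3/8 := by
        nlinarith [mul_nonneg (by linarith : (0:ℝ) ≤ (n:ℝ) - 2*a)
          (by nlinarith : (0:ℝ) ≤ (n:ℝ)^2 + 2*a*(n:ℝ) - 4*a^2)]
      have hb_eq : b = n - a := by linarith
      calc E^2 ≤ b * (((t:ℝ)-1) * a^2 + (8*(t:ℝ)^3+1) * E) := h1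
        _ = ((t:ℝ)-1) * (a^2*(n-a)) + (8*(t:ℝ)^3+1) * E * b := by rw [hb_eq]; ring
        _ ≤ ((t:ℝ)-1) * ((n:ℝ)^3/8) + (9*(t:ℝ)^3) * E * (n:ℝ) := by
            have e1 : ((t:ℝ)-1) * (a^2*(n-a)) ≤ ((t:ℝ)-1) * ((n:ℝ)^3/8) :=
              mul_le_mul_of_nonneg_left hcube (by linarith)
            have e2 : (8*(t:ℝ)^3+1) * E * b ≤ (9*(t:ℝ)^3) * E * (n:ℝ) := by
              have he3 : (8*(t:ℝ)^3+1) * E ≤ (9*(t:ℝ)^3) * E :=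
                mul_le_mul_of_nonneg_right hcoef hE0
              have hprod : (8*(t:ℝ)^3+1) * E * b ≤ (9*(t:ℝ)^3) * E * b :=
                mul_le_mul_of_nonneg_right he3 hb0
              have hprod2 : (9*(t:ℝ)^3) * E * b ≤ (9*(t:ℝ)^3) * E * n :=
                mul_le_mul_of_nonneg_left hmb (mul_nonneg (by positivity) hE0)
              linarith
            linarith
        _ = ((t:ℝ)-1) * (n:ℝ)^3/8 + (9*(t:ℝ)^3*n) * E := by ring
    · have h2a : 2*b ≤ n := by linarith
      have hmb : a ≤ n := by linarith
      have hcube : b^2*(n-b) ≤ (n:ℝ)^3/8 := by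
        nlinarith [mul_nonneg (by linarith : (0:ℝ) ≤ (n:ℝ) - 2*b)
          (by nlinarith : (0:ℝ) ≤ (n:ℝ)^2 + 2*b*(n:ℝ) - 4*b^2)]
      have hb_eq : a = n - b := by linarith
      calc E^2 ≤ a * (((t:ℝ)-1) * b^2 + (8*(t:ℝ)^3+1) * E) := h2
        _ = ((t:ℝ)-1) * (b^2*(n-b)) + (8*(t:ℝ)^3+1) * E * a := by rw [hb_eq]; ring
        _ ≤ ((t:ℝ)-1) * ((n:ℝ)^3/8) + (9*(t:ℝ)^3) * E * (n:ℝ) := by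
            have e1 : ((t:ℝ)-1) * (b^2*(n-b)) ≤ ((t:ℝ)-1) * ((n:ℝ)^3/8) :=
              mul_le_mul_of_nonneg_left hcube (by linarith)
            have e2 : (8*(t:ℝ)^3+1) * E * a ≤ (9*(t:ℝ)^3) * E * (n:ℝ) := by
              have he3 : (8*(t:ℝ)^3+1) * E ≤ (9*(t:ℝ)^3) * E :=
                mul_le_mul_of_nonneg_right hcoef hE0
              have hprod : (8*(t:ℝ)^3+1) * E * a ≤ (9*(t:ℝ)^3) * E * a :=
                mul_le_mul_of_nonneg_right he3 ha0
              have hprod2 : (9*(t:ℝ)^3) * E * a ≤ (9*(t:ℝ)^3) * E * n :=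
                mul_le_mul_of_nonneg_left hmb (mul_nonneg (by positivity) hE0)
              linarith
            linarith
        _ = ((t:ℝ)-1) * (n:ℝ)^3/8 + (9*(t:ℝ)^3*n) * E := by ring
  set K : ℝ := Real.sqrt (((t:ℝ)-1) * (n:ℝ)^3/8) with hK_def
  have hK0 : 0 ≤ K := Real.sqrt_nonneg _
  have hKsq : K^2 = ((t:ℝ)-1) * (n:ℝ)^3/8 := by
    rw [hK_def, Real.sq_sqrt]
    exact div_nonneg (mul_nonneg (by linarith) (by positivity)) (by norm_num)
  have hC0 : (0:ℝ) ≤ 9*(t:ℝ)^3*n := by positivity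
  have hEK : E ≤ K + 9*(t:ℝ)^3*n := by
    nlinarith [sq_nonneg (E - K), sq_nonneg (E + K), hquad, hKsq]
  have hsqrt8 : Real.sqrt 8 = 2 * Real.sqrt 2 := by
    rw [show (8:ℝ) = 2^2 * 2 by norm_num, Real.sqrt_mul (by positivity),
      Real.sqrt_sq (by norm_num)]
  have hn32 : ((n:ℝ)) ^ (3/2 : ℝ) = n * Real.sqrt n := by
    have h0 : (0:ℝ) < n := by linarith
    rw [show (3/2 : ℝ) = 1 + 1/2 by norm_num, Real.rpow_add h0, Real.rpow_one,
      ← Real.sqrt_eq_rpow]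
  have hsqrtn3 : Real.sqrt ((n:ℝ)^3) = n * Real.sqrt n := by
    rw [show (n:ℝ)^3 = (n:ℝ)^2 * n by ring, Real.sqrt_mul (by positivity),
      Real.sqrt_sq (by linarith)]
  have hKval : K = Real.sqrt ((t : ℝ) - 1) / (2 * Real.sqrt 2) * (n:ℝ) ^ (3/2 : ℝ) := by
    rw [hK_def, show ((t:ℝ)-1) * (n:ℝ)^3/8 = ((t:ℝ)-1) * ((n:ℝ)^3/8) by ring,
      Real.sqrt_mul (by linarith), show ((n:ℝ)^3/8 : ℝ) = (n:ℝ)^3 / 8 from rfl,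
      Real.sqrt_div (by positivity) 8, hsqrt8, hsqrtn3, hn32]
    ring
  -- the error term is at most ε n^{3/2}
  have herr : 9*(t:ℝ)^3*n ≤ ε * (n:ℝ) ^ (3/2 : ℝ) := by
    have hstep : (9*(t:ℝ)^3/ε)^2 ≤ (n:ℝ) := by
      have hle1 : (9*(t:ℝ)^3/ε)^2 ≤ (⌈(9*(t:ℝ)^3/ε)^2⌉₊ : ℝ) := Nat.le_ceil _
      have hle2 : (⌈(9*(t:ℝ)^3/ε)^2⌉₊ : ℝ) ≤ (n : ℝ) := by
        exact_mod_cast le_trans (by omega : ⌈(9*(t:ℝ)^3/ε)^2⌉₊ ≤ ⌈(9*(t:ℝ)^3/ε)^2⌉₊ + 1) hn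
      linarith
    have hsqrtstep : 9*(t:ℝ)^3/ε ≤ Real.sqrt n := by
      have h9 : (0:ℝ) ≤ 9*(t:ℝ)^3/ε := by positivity
      calc 9*(t:ℝ)^3/ε = Real.sqrt ((9*(t:ℝ)^3/ε)^2) := (Real.sqrt_sq h9).symm
        _ ≤ Real.sqrt n := Real.sqrt_le_sqrt hstep
    have h9t : 9*(t:ℝ)^3 ≤ ε * Real.sqrt n := by
      rw [div_le_iff₀ hε] at hsqrtstep
      linarith [hsqrtstep]
    rw [hn32]
    calc 9*(t:ℝ)^3*n ≤ (ε * Real.sqrt n) * n := by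
          refine mul_le_mul_of_nonneg_right h9t (by linarith)
      _ = ε * ((n:ℝ) * Real.sqrt n) := by ring
  rw [hEncard]
  calc E ≤ K + 9*(t:ℝ)^3*n := hEK
    _ ≤ Real.sqrt ((t : ℝ) - 1) / (2 * Real.sqrt 2) * (n:ℝ) ^ (3/2 : ℝ)
        + ε * (n:ℝ) ^ (3/2 : ℝ) := by
        rw [← hKval]
        linarith [herr]
    _ = (Real.sqrt ((t : ℝ) - 1) / (2 * Real.sqrt 2) + ε) * (n : ℝ) ^ (3/2 : ℝ) := by ring
end

section
/- For every integer t ≥ 1 and every ε > 0 there exists N such that for all n ≥ N, every bipartite graph G on n vertices that contains no subgraph isomorphic to B_t satisfies e(G) ≤ (√t/(2√2) + ε)·n^{3/2}. (That is, ex_bip(n, B_t) ≤ (√t/(2√2))(1+o(1))·n^{3/2}.) -/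
open SimpleGraph

open Finset

section Aux

private lemma aux_small (T ε s κ a b e : ℝ) (hT : 1 ≤ T) (hε : 0 < ε)
    (hspos : 0 < s) (hts : 12 * T ≤ ε * s) (hκpos : 0 < κ) (h8 : 8 * κ ^ 2 = T)
    (ha : 0 ≤ a) (hb : 0 ≤ b) (he : 0 ≤ e) (hab : a + b = s ^ 2)
    (hA : a ≤ s ^ 2 / 4)
    (h1 : e ^ 2 ≤ T * (a ^ 2 * b) + T * (e * b)) :
    e ≤ (κ + ε) * s ^ 3 := by
  have hT0 : (0:ℝ) ≤ T := by linarith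
  have hbn : b ≤ s ^ 2 := by nlinarith
  have hs0 : 0 ≤ s := le_of_lt hspos
  have hts2 : T * s ^ 2 ≤ ε * s ^ 3 / 12 := by
    nlinarith [mul_le_mul_of_nonneg_right hts (sq_nonneg s)]
  by_contra hcon
  push_neg at hcon
  have ha2 : a ^ 2 ≤ s ^ 4 / 16 := by nlinarith
  have ha2b : a ^ 2 * b ≤ s ^ 6 / 16 := by
    nlinarith [mul_le_mul ha2 hbn hb (by positivity : (0:ℝ) ≤ s ^ 4 / 16)]
  have h1' : e ^ 2 ≤ T * (s ^ 6 / 16) + T * (e * s ^ 2) := by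
    have e1 := mul_le_mul_of_nonneg_left ha2b hT0
    have e2 := mul_le_mul_of_nonneg_left (mul_le_mul_of_nonneg_left hbn he) hT0
    linarith
  have hets : κ * s ^ 3 < e - T * s ^ 2 := by nlinarith
  have hprod : ((κ + ε) * s ^ 3) * (κ * s ^ 3) < e * (e - T * s ^ 2) :=
    mul_lt_mul'' hcon hets (by positivity) (by positivity)
  have hexp : ((κ + ε) * s ^ 3) * (κ * s ^ 3) = κ^2*s^6 + κ*ε*s^6 := by ring
  have h16 : T * (s^6/16) = κ^2*s^6/2 := by rw [← h8]; ring
  have hY : (0:ℝ) < κ*ε*s^6 := by positivity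
  have hexp2 : e * (e - T * s ^ 2) = e^2 - T * (e * s^2) := by ring
  have hX : (0:ℝ) < κ^2*s^6 := by positivity
  linarith

private lemma aux_crude (T s a b e : ℝ) (hT : 1 ≤ T)
    (hspos : 0 < s)
    (ha : 0 ≤ a) (hb : 0 ≤ b) (he : 0 ≤ e) (hab : a + b = s ^ 2)
    (hbig : 2 * T * s ^ 2 < e)
    (h1 : e ^ 2 ≤ T * (a ^ 2 * b) + T * (e * b)) :
    e ^ 2 ≤ 2 * T * s ^ 6 := by
  have hT0 : (0:ℝ) ≤ T := by linarith
  have hbn : b ≤ s ^ 2 := by nlinarith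
  have han : a ≤ s ^ 2 := by nlinarith
  have hepos : (0:ℝ) < e := by nlinarith
  have haa : a ^ 2 ≤ s ^ 4 := by
    nlinarith [mul_le_mul han han ha (sq_nonneg s)]
  have ha2b : a ^ 2 * b ≤ s ^ 6 := by
    nlinarith [mul_le_mul haa hbn hb (by positivity : (0:ℝ) ≤ s ^ 4)]
  have h1'' : e ^ 2 ≤ T * s ^ 6 + T * (e * s ^ 2) := by
    have e1 := mul_le_mul_of_nonneg_left ha2b hT0
    have e2 := mul_le_mul_of_nonneg_left (mul_le_mul_of_nonneg_left hbn he) hT0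
    linarith
  nlinarith [mul_lt_mul_of_pos_left hbig hepos]

private lemma aux_eta (T s η e x : ℝ) (hT : 1 ≤ T) (hspos : 0 < s) (he : 0 ≤ e)
    (hx : s ^ 2 / 4 < x) (hηs2 : η^2 * s^2 = 529 * T) (hηpos : 0 < η)
    (hM : e ^ 2 ≤ 2 * T * s ^ 6) :
    e ≤ η * x ^ 2 := by
  have hx0 : 0 ≤ x := by nlinarith
  have hx4 : s ^ 8 / 256 ≤ x ^ 4 := by
    have := pow_le_pow_left₀ (by positivity : (0:ℝ) ≤ s^2/4) (le_of_lt hx) 4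
    nlinarith [this]
  have hts8 : (0:ℝ) ≤ T * s^8 := by positivity
  have key : 2*T*s^6 * s^2 ≤ (η*x^2)^2 * s^2 := by
    have heq : (η*x^2)^2 * s^2 = 529*T*x^4 := by
      calc (η*x^2)^2 * s^2 = η^2*s^2*x^4 := by ring
        _ = 529*T*x^4 := by rw [hηs2]
    have := mul_le_mul_of_nonneg_left hx4 (by positivity : (0:ℝ) ≤ 529*T)
    nlinarith [this, hts8]
  have hη2 : 2*T*s^6 ≤ (η*x^2)^2 :=
    le_of_mul_le_mul_right (by linarith) (by positivity : (0:ℝ) < s^2)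
  exact le_of_pow_le_pow_left₀ two_ne_zero (by positivity) (hM.trans hη2)

set_option maxHeartbeats 2000000 in
private lemma aux_big (T ε s κ τ ρ a b e : ℝ) (hT : 1 ≤ T) (hε : 0 < ε)
    (hspos : 0 < s) (hts : 12 * T ≤ ε * s)
    (hτ2 : τ ^ 2 = T) (hτ1 : 1 ≤ τ) (hρ2 : ρ ^ 2 = 2) (hρ1 : 1 ≤ ρ)
    (hκ : κ = τ / (2 * ρ))
    (ha : 0 ≤ a) (hb : 0 ≤ b) (he : 0 ≤ e) (hab : a + b = s ^ 2)
    (hA : s ^ 2 / 4 < a) (hB : s ^ 2 / 4 < b)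
    (h1 : e ^ 2 ≤ T * (a ^ 2 * b) + T * (e * b))
    (h2 : e ^ 2 ≤ T * (b ^ 2 * a) + T * (e * a)) :
    e ≤ (κ + ε) * s ^ 3 := by
  have hT0 : (0:ℝ) ≤ T := by linarith
  have hκpos : 0 < κ := by rw [hκ]; positivity
  have h8 : 8 * κ ^ 2 = T := by
    rw [hκ, div_pow, mul_pow, hρ2, ← hτ2]; field_simp; ring
  rcases le_or_gt e (2 * T * s ^ 2) with hsmall | hbig
  · have hts2 : T * s ^ 2 ≤ ε * s ^ 3 / 12 := by
      nlinarith [mul_le_mul_of_nonneg_right hts (sq_nonneg s)]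
    have hexp : (κ+ε)*s^3 = κ*s^3 + ε*s^3 := by ring
    have hp1 : (0:ℝ) < κ*s^3 := by positivity
    have hp2 : (0:ℝ) < ε*s^3 := by positivity
    linarith
  have hM : e ^ 2 ≤ 2 * T * s ^ 6 := aux_crude T s a b e hT hspos ha hb he hab hbig h1
  by_contra hcon
  push_neg at hcon
  set η : ℝ := 23 * τ / s with hηdef
  have hηpos : 0 < η := by
    have : 0 < τ := by linarith
    rw [hηdef]; positivity
  have hηs : η * s = 23 * τ := by rw [hηdef]; field_simp
  have hηs2 : η^2 * s^2 = 529 * T := by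
    rw [← hτ2]; linear_combination (η*s + 23*τ) * hηs
  have hea : e ≤ η * a ^ 2 := aux_eta T s η e a hT hspos he hA hηs2 hηpos hM
  have heb : e ≤ η * b ^ 2 := aux_eta T s η e b hT hspos he hB hηs2 hηpos hM
  have h1c : e ^ 2 ≤ T * b * ((1 + η) * a ^ 2) := by
    have := mul_le_mul_of_nonneg_left hea (by positivity : (0:ℝ) ≤ T * b)
    nlinarith [this]
  have h2c : e ^ 2 ≤ T * a * ((1 + η) * b ^ 2) := by
    have := mul_le_mul_of_nonneg_left heb (by positivity : (0:ℝ) ≤ T * a)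
    nlinarith [this]
  have h4 : e ^ 4 ≤ T ^ 2 * (1 + η) ^ 2 * (a * b) ^ 3 := by
    have hh := mul_le_mul h1c h2c (by positivity)
      (by positivity : (0:ℝ) ≤ T * b * ((1 + η) * a ^ 2))
    calc e ^ 4 = e ^ 2 * e ^ 2 := by ring
      _ ≤ (T * b * ((1 + η) * a ^ 2)) * (T * a * ((1 + η) * b ^ 2)) := hh
      _ = T ^ 2 * (1 + η) ^ 2 * (a * b) ^ 3 := by ring
  have hab4 : (a * b) ^ 3 ≤ (s ^ 4 / 4) ^ 3 := by
    have : a * b ≤ s ^ 4 / 4 := by nlinarith [sq_nonneg (a - b), sq_nonneg (a + b)]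
    exact pow_le_pow_left₀ (by positivity) this 3
  have hcρ : κ * (2*ρ) = τ := by rw [hκ]; field_simp
  have h2ρ : κ * τ * (2*ρ) = T := by rw [← hτ2]; linear_combination τ * hcρ
  have hκτ : κ * τ ≤ T / 2 := by nlinarith [hρ1, mul_pos hκpos (by linarith : (0:ℝ) < τ)]
  have hκηe : κ * η ≤ 2 * ε := by
    have hq : κ * η * s = 23 * (κ * τ) := by
      calc κ * η * s = κ * (η * s) := by ring
        _ = 23 * (κ * τ) := by rw [hηs]; ring
    have hh : κ * η * s ≤ 2 * ε * s := by nlinarith [hκτ, hts]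
    exact le_of_mul_le_mul_right (by linarith) hspos
  have hκη : κ ^ 2 * (1 + η) ≤ (κ + ε) ^ 2 := by
    have := mul_le_mul_of_nonneg_left hκηe (le_of_lt hκpos)
    nlinarith [sq_nonneg ε]
  have hc4 : ((κ + ε) * s ^ 3) ^ 4 < e ^ 4 :=
    pow_lt_pow_left₀ hcon (by positivity) (by norm_num)
  have hfinal : T ^ 2 * (1 + η) ^ 2 * (s ^ 4 / 4) ^ 3 ≤ ((κ + ε) * s ^ 3) ^ 4 := by
    have ht2 : T ^ 2 = 64 * κ ^ 4 := by nlinarith [h8]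
    have hsq : (κ^2*(1+η))^2 ≤ ((κ+ε)^2)^2 := pow_le_pow_left₀ (by positivity) hκη 2
    calc T ^ 2 * (1 + η) ^ 2 * (s ^ 4 / 4) ^ 3 = (κ^2*(1+η))^2 * s^12 := by
          rw [ht2]; ring
      _ ≤ ((κ+ε)^2)^2 * s^12 := mul_le_mul_of_nonneg_right hsq (by positivity)
      _ = ((κ + ε) * s ^ 3) ^ 4 := by ring
  have hchain := mul_le_mul_of_nonneg_left hab4
    (by positivity : (0:ℝ) ≤ T^2 * (1+η)^2)
  linarith

lemma endgame (t : ℕ) (ht : 1 ≤ t) (ε : ℝ) (hε : 0 < ε) :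
    ∃ N : ℕ, ∀ n : ℕ, N ≤ n → ∀ a b e : ℝ, 0 ≤ a → 0 ≤ b → 0 ≤ e →
      a + b = n →
      e ^ 2 ≤ t * (a ^ 2 * b) + t * (e * b) →
      e ^ 2 ≤ t * (b ^ 2 * a) + t * (e * a) →
      e ≤ (Real.sqrt t / (2 * Real.sqrt 2) + ε) * (n : ℝ) ^ (3/2 : ℝ) := by
  refine ⟨⌈(12 * t / ε) ^ 2⌉₊ + 1, fun n hn a b e ha hb he hab h1 h2 => ?_⟩
  have ht1 : (1 : ℝ) ≤ t := by exact_mod_cast ht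
  set s : ℝ := Real.sqrt n with hsdef
  have hs0 : 0 ≤ s := Real.sqrt_nonneg _
  have hs2 : s ^ 2 = n := Real.sq_sqrt (Nat.cast_nonneg n)
  have hsge : 12 * t / ε ≤ s := by
    have h1' : ((12 * t / ε) ^ 2 : ℝ) ≤ n := by
      calc ((12 * t / ε) ^ 2 : ℝ) ≤ ⌈(12 * t / ε) ^ 2⌉₊ := Nat.le_ceil _
        _ ≤ n := by exact_mod_cast Nat.le_of_succ_le hn
    calc 12 * t / ε = Real.sqrt ((12 * t / ε) ^ 2) := by
          rw [Real.sqrt_sq (by positivity)]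
      _ ≤ s := Real.sqrt_le_sqrt h1'
  have hts : 12 * (t : ℝ) ≤ ε * s := by
    rw [div_le_iff₀ hε] at hsge; linarith
  have hspos : 0 < s := by nlinarith
  have h32 : (n : ℝ) ^ (3/2 : ℝ) = s ^ 3 := by
    rw [hsdef, Real.sqrt_eq_rpow, ← Real.rpow_natCast ((n:ℝ) ^ (1/2:ℝ)) 3,
      ← Real.rpow_mul (Nat.cast_nonneg n)]
    norm_num
  rw [h32]
  set τ : ℝ := Real.sqrt t with hτdef
  set ρ : ℝ := Real.sqrt 2 with hρdef
  have hτ2 : τ ^ 2 = t := Real.sq_sqrt (by positivity)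
  have hρ2 : ρ ^ 2 = 2 := Real.sq_sqrt (by norm_num)
  have hτ1 : 1 ≤ τ := by nlinarith [Real.sqrt_nonneg (t:ℝ)]
  have hρ1 : 1 ≤ ρ := by nlinarith [Real.sqrt_nonneg (2:ℝ)]
  have hκpos : 0 < τ / (2 * ρ) := by positivity
  have h8 : 8 * (τ / (2 * ρ)) ^ 2 = (t:ℝ) := by
    rw [div_pow, mul_pow, hρ2, ← hτ2]; field_simp; ring
  have hab' : a + b = s ^ 2 := by rw [hs2, hab]
  rcases le_or_gt a (s ^ 2 / 4) with hA | hA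
  · exact aux_small (t:ℝ) ε s _ a b e ht1 hε hspos hts hκpos h8 ha hb he hab' hA h1
  rcases le_or_gt b (s ^ 2 / 4) with hB | hB
  · have hab'' : b + a = s ^ 2 := by linarith
    exact aux_small (t:ℝ) ε s _ b a e ht1 hε hspos hts hκpos h8 hb ha he hab'' hB h2
  · exact aux_big (t:ℝ) ε s _ τ ρ a b e ht1 hε hspos hts hτ2 hτ1 hρ2 hρ1 rfl
      ha hb he hab' hA hB h1 h2

lemma sum_degree_side {n : ℕ} (G : SimpleGraph (Fin n)) [DecidableRel G.Adj]
    (S : Finset (Fin n)) (hS : ∀ ⦃x y⦄, G.Adj x y → (x ∈ S ↔ y ∉ S)) :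
    ∑ v ∈ S, G.degree v = G.edgeFinset.card := by
  classical
  have h1 : ∑ v ∈ S, G.degree v
      = (Finset.univ.filter (fun d : G.Dart => d.fst ∈ S)).card := by
    rw [Finset.card_eq_sum_card_fiberwise
      (s := Finset.univ.filter (fun d : G.Dart => d.fst ∈ S))
      (f := fun d : G.Dart => d.fst) (t := S) (fun d hd => (Finset.mem_filter.mp hd).2)]
    apply Finset.sum_congr rfl
    intro v hv
    rw [← SimpleGraph.dart_fst_fiber_card_eq_degree]
    congr 1
    ext d
    simp only [Finset.mem_filter, Finset.mem_univ, true_and]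
    constructor
    · rintro rfl; exact ⟨hv, rfl⟩
    · exact fun h => h.2
  rw [h1]
  apply Finset.card_bij (fun d _ => d.edge)
  · intro d hd
    rw [SimpleGraph.mem_edgeFinset]
    exact d.edge_mem
  · intro d1 h1 d2 h2 heq
    rcases (SimpleGraph.dart_edge_eq_iff d1 d2).mp heq with h | h
    · exact h
    · exfalso
      simp only [Finset.mem_filter, Finset.mem_univ, true_and] at h1 h2
      have hfst : d1.fst = d2.snd := by rw [h]; rfl
      have := (hS d2.adj).mp h2
      rw [← hfst] at this
      exact this h1
  · intro e he
    rw [SimpleGraph.mem_edgeFinset] at he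
    induction e with
    | _ x y =>
      rw [SimpleGraph.mem_edgeSet] at he
      by_cases hx : x ∈ S
      · exact ⟨SimpleGraph.Dart.mk (x, y) he, by simpa using hx, rfl⟩
      · have hy : y ∈ S := by
          by_contra hy
          exact hx (((hS he).mpr hy))
        exact ⟨SimpleGraph.Dart.mk (y, x) he.symm, by simpa using hy, Sym2.eq_swap⟩

lemma heavy_nbrs_le {n t : ℕ} (ht : 1 ≤ t) (G : SimpleGraph (Fin n)) [DecidableRel G.Adj]
    (hfree : ¬ ContainsCopy (Bgraph t) G)
    (S : Finset (Fin n)) (hS : ∀ ⦃x y⦄, G.Adj x y → (x ∈ S ↔ y ∉ S))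
    (u v : Fin n) (hu : u ∈ S) (huv : G.Adj u v) :
    (Finset.univ.filter (fun u' => u' ≠ u ∧ G.Adj v u' ∧
        t + 1 ≤ (G.neighborFinset u ∩ G.neighborFinset u').card)).card ≤ t - 1 := by
  classical
  by_contra hcard
  push_neg at hcard
  have hcard' : t ≤ (Finset.univ.filter (fun u' => u' ≠ u ∧ G.Adj v u' ∧
      t + 1 ≤ (G.neighborFinset u ∩ G.neighborFinset u').card)).card := by omega
  obtain ⟨s, hs_sub, hs_card⟩ := Finset.exists_subset_card_eq hcard'
  have eqv : s ≃ Fin t := s.equivFinOfCardEq hs_card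
  set w : Fin t → Fin n := fun j => ((eqv.symm j : s) : Fin n) with hwdef
  have hw_inj : Function.Injective w := by
    intro i j hij
    exact (Equiv.injective eqv.symm) (Subtype.ext hij)
  have hw_mem : ∀ j, w j ∈ s := fun j => (eqv.symm j).2
  have hw_prop : ∀ j, w j ≠ u ∧ G.Adj v (w j) ∧
      t + 1 ≤ (G.neighborFinset u ∩ G.neighborFinset (w j)).card := by
    intro j
    have := hs_sub (hw_mem j)
    simpa using this
  -- Hall's theorem to pick the x's
  set Tf : Fin t → Finset (Fin n) :=
    fun j => (G.neighborFinset u ∩ G.neighborFinset (w j)).erase v with hTdef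
  have hTcard : ∀ j, t ≤ (Tf j).card := by
    intro j
    show t ≤ ((G.neighborFinset u ∩ G.neighborFinset (w j)).erase v).card
    have h1 := (hw_prop j).2.2
    have h2 := Finset.pred_card_le_card_erase
      (s := G.neighborFinset u ∩ G.neighborFinset (w j)) (a := v)
    omega
  have hall : ∀ s' : Finset (Fin t), s'.card ≤ (s'.biUnion Tf).card := by
    intro s'
    rcases Finset.eq_empty_or_nonempty s' with rfl | ⟨j, hj⟩
    · simp
    · calc s'.card ≤ Finset.univ.card := Finset.card_le_univ s'
        _ = t := by simp
        _ ≤ (Tf j).card := hTcard j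
        _ ≤ (s'.biUnion Tf).card :=
            Finset.card_le_card (fun x hx => Finset.mem_biUnion.mpr ⟨j, hj, hx⟩)
  obtain ⟨x, hx_inj, hx_mem⟩ :=
    (Finset.all_card_le_biUnion_card_iff_exists_injective Tf).mp hall
  -- basic facts
  have hvS : v ∉ S := (hS huv).mp hu
  have hx_ne_v : ∀ j, x j ≠ v := fun j => Finset.ne_of_mem_erase (hx_mem j)
  have hx_adj_u : ∀ j, G.Adj u (x j) := by
    intro j
    have := Finset.mem_of_mem_erase (hx_mem j)
    exact (SimpleGraph.mem_neighborFinset _ _ _).mp (Finset.mem_of_mem_inter_left this)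
  have hx_adj_w : ∀ j, G.Adj (w j) (x j) := by
    intro j
    have := Finset.mem_of_mem_erase (hx_mem j)
    exact (SimpleGraph.mem_neighborFinset _ _ _).mp (Finset.mem_of_mem_inter_right this)
  have hxS : ∀ j, x j ∉ S := fun j => (hS (hx_adj_u j)).mp hu
  have hwS : ∀ j, w j ∈ S := by
    intro j
    by_contra hw
    exact hvS ((hS (hw_prop j).2.1).mpr hw)
  have hw_ne_u : ∀ j, w j ≠ u := fun j => (hw_prop j).1
  -- the embedding
  apply hfree
  have huvne : u ≠ v := G.ne_of_adj huv
  have hi2 : ∀ k : Fin 2, k = 0 ∨ k = 1 := by decide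
  refine ⟨fun p => Sum.elim (fun _ => ![u, v] p.1) (fun j => ![x j, w j] p.1) p.2, ?_, ?_⟩
  · rintro ⟨i, p⟩ ⟨i', p'⟩ hpq
    simp only [Sum.elim_inl, Sum.elim_inr] at hpq
    rcases p with z | j <;> rcases p' with z' | j' <;>
        rcases hi2 i with rfl | rfl <;> rcases hi2 i' with rfl | rfl <;>
        simp only [Sum.elim_inl, Sum.elim_inr, Matrix.cons_val_zero, Matrix.cons_val_one,
          Matrix.head_cons] at hpq <;>
        first
        | exact Prod.ext rfl (congrArg Sum.inl (Subsingleton.elim _ _))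
        | exact Prod.ext rfl (congrArg Sum.inr (hx_inj hpq))
        | exact Prod.ext rfl (congrArg Sum.inr (hw_inj hpq))
        | exact absurd hpq huvne
        | exact absurd hpq (Ne.symm huvne)
        | exact absurd hpq (G.ne_of_adj (hx_adj_u _))
        | exact absurd hpq (Ne.symm (G.ne_of_adj (hx_adj_u _)))
        | exact absurd hpq (Ne.symm (hw_ne_u _))
        | exact absurd hpq (hw_ne_u _)
        | exact absurd hpq (hx_ne_v _)
        | exact absurd hpq (Ne.symm (hx_ne_v _))
        | exact absurd (show v ∈ S by rw [hpq]; exact hwS _) hvS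
        | exact absurd (show v ∈ S by rw [← hpq]; exact hwS _) hvS
        | exact absurd (show x _ ∈ S by rw [hpq]; exact hwS _) (hxS _)
        | exact absurd (show x _ ∈ S by rw [← hpq]; exact hwS _) (hxS _)
  · rintro ⟨i, p⟩ ⟨i', p'⟩ hadj
    simp only [Bgraph, SimpleGraph.boxProd_adj, SimpleGraph.top_adj,
      completeBipartiteGraph_adj, Sum.isLeft_inl, Sum.isRight_inr, Sum.isLeft_inr,
      Sum.isRight_inl] at hadj
    rcases p with z | j <;> rcases p' with z' | j'
    · -- both inl : must be the K₂ edge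
      rcases hadj with ⟨hne, -⟩ | ⟨hfalse, -⟩
      · rcases hi2 i with rfl | rfl <;> rcases hi2 i' with rfl | rfl <;>
          simp only [Sum.elim_inl, Matrix.cons_val_zero, Matrix.cons_val_one,
            Matrix.head_cons]
        · exact absurd rfl hne
        · exact huv
        · exact huv.symm
        · exact absurd rfl hne
      · simp at hfalse
    · -- inl, inr : spoke edge, i = i'
      have hii : i = i' := by
        rcases hadj with ⟨-, habs⟩ | ⟨-, h⟩
        · exact absurd habs (by simp)
        · first | exact h | exact h.symm
      subst hii
      rcases hi2 i with rfl | rfl <;>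
        simp only [Sum.elim_inl, Sum.elim_inr, Matrix.cons_val_zero, Matrix.cons_val_one,
          Matrix.head_cons]
      · exact hx_adj_u j'
      · exact (hw_prop j').2.1
    · have hii : i = i' := by
        rcases hadj with ⟨-, habs⟩ | ⟨-, h⟩
        · exact absurd habs (by simp)
        · first | exact h | exact h.symm
      subst hii
      rcases hi2 i with rfl | rfl <;>
        simp only [Sum.elim_inl, Sum.elim_inr, Matrix.cons_val_zero, Matrix.cons_val_one,
          Matrix.head_cons]
      · exact (hx_adj_u j).symm
      · exact ((hw_prop j).2.1).symm
    · -- both inr : rung edge, i ≠ i', j = j'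
      rcases hadj with ⟨hne, hjj⟩ | ⟨hfalse, -⟩
      · have hj : j = j' := by simpa using hjj
        subst hj
        rcases hi2 i with rfl | rfl <;> rcases hi2 i' with rfl | rfl <;>
          simp only [Sum.elim_inr, Matrix.cons_val_zero, Matrix.cons_val_one,
            Matrix.head_cons]
        · exact absurd rfl hne
        · exact (hx_adj_w j).symm
        · exact hx_adj_w j
        · exact absurd rfl hne
      · simp at hfalse

set_option maxHeartbeats 1000000 in
lemma main_nat {n t : ℕ} (ht : 1 ≤ t) (G : SimpleGraph (Fin n)) [DecidableRel G.Adj]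
    (hfree : ¬ ContainsCopy (Bgraph t) G)
    (S : Finset (Fin n)) (hS : ∀ ⦃x y⦄, G.Adj x y → (x ∈ S ↔ y ∉ S)) :
    ∑ v ∈ Sᶜ, G.degree v ^ 2 ≤ t * S.card ^ 2 + t * G.edgeFinset.card := by
  classical
  have hdeg : ∀ v ∈ Sᶜ, G.degree v = (S.filter (fun u => G.Adj v u)).card := by
    intro v hv
    rw [Finset.mem_compl] at hv
    rw [← SimpleGraph.card_neighborFinset_eq_degree, SimpleGraph.neighborFinset_eq_filter]
    congr 1
    ext u
    simp only [Finset.mem_filter, Finset.mem_univ, true_and, and_comm]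
    constructor
    · intro h; exact ⟨by_contra fun hns => hv ((hS h).mpr hns), h⟩
    · exact fun h => h.2
  -- the double-counting identity
  have hident : ∑ v ∈ Sᶜ, G.degree v ^ 2
      = ∑ u ∈ S, ∑ u' ∈ S, (Sᶜ.filter (fun v => G.Adj v u ∧ G.Adj v u')).card := by
    have step1 : ∑ v ∈ Sᶜ, G.degree v ^ 2
        = ∑ v ∈ Sᶜ, ∑ u ∈ S, ∑ u' ∈ S, (if G.Adj v u ∧ G.Adj v u' then 1 else 0) := by
      apply Finset.sum_congr rfl
      intro v hv
      rw [hdeg v hv, Finset.card_filter, sq, Finset.sum_mul_sum]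
      apply Finset.sum_congr rfl; intro u _
      apply Finset.sum_congr rfl; intro u' _
      by_cases h1 : G.Adj v u <;> by_cases h2 : G.Adj v u' <;> simp [h1, h2]
    rw [step1, Finset.sum_comm]
    apply Finset.sum_congr rfl
    intro u _
    rw [Finset.sum_comm]
    apply Finset.sum_congr rfl
    intro u' _
    rw [Finset.card_filter]
  rw [hident]
  -- per-u bound
  have hperu : ∀ u ∈ S,
      ∑ u' ∈ S, (Sᶜ.filter (fun v => G.Adj v u ∧ G.Adj v u')).card
        ≤ t * G.degree u + t * S.card := by
    intro u hu
    rw [← Finset.add_sum_erase _ _ hu]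
    have hdiag : (Sᶜ.filter (fun v => G.Adj v u ∧ G.Adj v u)).card ≤ G.degree u := by
      rw [← SimpleGraph.card_neighborFinset_eq_degree]
      apply Finset.card_le_card
      intro v hv
      rw [Finset.mem_filter] at hv
      exact (SimpleGraph.mem_neighborFinset _ _ _).mpr hv.2.1.symm
    set P : Fin n → Prop := fun u' =>
      t + 1 ≤ (G.neighborFinset u ∩ G.neighborFinset u').card with hP
    have hsplit := Finset.sum_filter_add_sum_filter_not (S.erase u) P
      (fun u' => (Sᶜ.filter (fun v => G.Adj v u ∧ G.Adj v u')).card)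
    -- light part
    have hlight : ∑ u' ∈ (S.erase u).filter (fun x => ¬ P x),
        (Sᶜ.filter (fun v => G.Adj v u ∧ G.Adj v u')).card ≤ S.card * t := by
      calc ∑ u' ∈ (S.erase u).filter (fun x => ¬ P x),
          (Sᶜ.filter (fun v => G.Adj v u ∧ G.Adj v u')).card
          ≤ ∑ _u' ∈ (S.erase u).filter (fun x => ¬ P x), t := by
            apply Finset.sum_le_sum
            intro u' hu'
            rw [Finset.mem_filter, hP, not_le] at hu'
            have hsub : (Sᶜ.filter (fun v => G.Adj v u ∧ G.Adj v u')).card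
                ≤ (G.neighborFinset u ∩ G.neighborFinset u').card := by
              apply Finset.card_le_card
              intro v hv
              rw [Finset.mem_filter] at hv
              rw [Finset.mem_inter, SimpleGraph.mem_neighborFinset,
                SimpleGraph.mem_neighborFinset]
              exact ⟨hv.2.1.symm, hv.2.2.symm⟩
            omega
        _ = ((S.erase u).filter (fun x => ¬ P x)).card * t := by
            rw [Finset.sum_const, smul_eq_mul]
        _ ≤ S.card * t := by
            apply Nat.mul_le_mul_right
            calc ((S.erase u).filter (fun x => ¬ P x)).card
                ≤ (S.erase u).card := Finset.card_filter_le _ _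
              _ ≤ S.card := Finset.card_le_card (Finset.erase_subset _ _)
    -- heavy part
    have hheavy : ∑ u' ∈ (S.erase u).filter P,
        (Sᶜ.filter (fun v => G.Adj v u ∧ G.Adj v u')).card ≤ G.degree u * (t - 1) := by
      have hswap : ∑ u' ∈ (S.erase u).filter P,
          (Sᶜ.filter (fun v => G.Adj v u ∧ G.Adj v u')).card
          = ∑ v ∈ Sᶜ.filter (fun v => G.Adj v u),
            (((S.erase u).filter P).filter (fun u' => G.Adj v u')).card := by
        have lhs : ∀ u', (Sᶜ.filter (fun v => G.Adj v u ∧ G.Adj v u')).card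
            = ∑ v ∈ Sᶜ.filter (fun v => G.Adj v u), (if G.Adj v u' then 1 else 0) := by
          intro u'
          rw [← Finset.filter_filter, Finset.card_filter]
        simp_rw [lhs]
        rw [Finset.sum_comm]
        apply Finset.sum_congr rfl
        intro v _
        rw [Finset.card_filter]
      rw [hswap]
      calc ∑ v ∈ Sᶜ.filter (fun v => G.Adj v u),
            (((S.erase u).filter P).filter (fun u' => G.Adj v u')).card
          ≤ ∑ _v ∈ Sᶜ.filter (fun v => G.Adj v u), (t - 1) := by
            apply Finset.sum_le_sum
            intro v hv
            rw [Finset.mem_filter] at hv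
            have hbound := heavy_nbrs_le ht G hfree S hS u v hu hv.2.symm
            refine le_trans (Finset.card_le_card ?_) hbound
            intro u' hu'
            simp only [Finset.mem_filter, Finset.mem_erase] at hu'
            simp only [Finset.mem_filter, Finset.mem_univ, true_and]
            exact ⟨hu'.1.1.1, hu'.2, hu'.1.2⟩
        _ = (Sᶜ.filter (fun v => G.Adj v u)).card * (t - 1) := by
            rw [Finset.sum_const, smul_eq_mul]
        _ ≤ G.degree u * (t - 1) := by
            apply Nat.mul_le_mul_right
            rw [← SimpleGraph.card_neighborFinset_eq_degree]
            apply Finset.card_le_card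
            intro v hv
            rw [Finset.mem_filter] at hv
            exact (SimpleGraph.mem_neighborFinset _ _ _).mpr hv.2.symm
    have : ∑ u' ∈ S.erase u, (Sᶜ.filter (fun v => G.Adj v u ∧ G.Adj v u')).card
        ≤ G.degree u * (t - 1) + S.card * t := by
      calc ∑ u' ∈ S.erase u, (Sᶜ.filter (fun v => G.Adj v u ∧ G.Adj v u')).card
          = _ + _ := hsplit.symm
        _ ≤ G.degree u * (t - 1) + S.card * t := Nat.add_le_add hheavy hlight
    have hfin : G.degree u + (G.degree u * (t - 1) + S.card * t)
        = t * G.degree u + t * S.card := by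
      have h1 : G.degree u + G.degree u * (t - 1) = G.degree u * t := by
        cases t with
        | zero => omega
        | succ t' => rw [Nat.succ_sub_one]; ring
      rw [← Nat.add_assoc, h1]; ring
    omega
  calc ∑ u ∈ S, ∑ u' ∈ S, (Sᶜ.filter (fun v => G.Adj v u ∧ G.Adj v u')).card
      ≤ ∑ u ∈ S, (t * G.degree u + t * S.card) := Finset.sum_le_sum hperu
    _ = t * (∑ u ∈ S, G.degree u) + t * S.card * S.card := by
        rw [Finset.sum_add_distrib, Finset.mul_sum, Finset.sum_const, smul_eq_mul]; ring
    _ = t * S.card ^ 2 + t * G.edgeFinset.card := by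
        rw [sum_degree_side G S hS]; ring

end Aux

theorem ex_bip_Bt_upper (t : ℕ) (ht : 1 ≤ t) (ε : ℝ) (hε : 0 < ε) :
    ∃ N : ℕ, ∀ n : ℕ, N ≤ n → ∀ G : SimpleGraph (Fin n), G.Colorable 2 →
      ¬ ContainsCopy (Bgraph t) G →
      (G.edgeSet.ncard : ℝ)
        ≤ (Real.sqrt t / (2 * Real.sqrt 2) + ε) * (n : ℝ) ^ (3/2 : ℝ) := by
  obtain ⟨N, hN⟩ := endgame t ht ε hε
  refine ⟨N, fun n hn G hcol hfree => ?_⟩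
  classical
  letI : DecidableRel G.Adj := Classical.decRel _
  obtain ⟨C⟩ := hcol
  have hfin2 : ∀ k : Fin 2, k = 0 ∨ k = 1 := by decide
  set S : Finset (Fin n) := Finset.univ.filter (fun v => C v = 0) with hSdef
  have hmemS : ∀ x, x ∈ S ↔ C x = 0 := by
    intro x; rw [hSdef]; simp
  have hS : ∀ ⦃x y⦄, G.Adj x y → (x ∈ S ↔ y ∉ S) := by
    intro x y hxy
    have hne := C.valid hxy
    rw [hmemS, hmemS]
    constructor
    · intro hx hy; exact hne (by rw [hx, hy])
    · intro hy
      rcases hfin2 (C x) with h | h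
      · exact h
      · exfalso
        rcases hfin2 (C y) with h' | h'
        · exact hy h'
        · exact hne (by rw [h, h'])
  have hSc : ∀ ⦃x y⦄, G.Adj x y → (x ∈ Sᶜ ↔ y ∉ Sᶜ) := by
    intro x y hxy
    rw [Finset.mem_compl, Finset.mem_compl, not_not]
    have := hS hxy
    tauto
  have h1nat := main_nat ht G hfree S hS
  have h2nat := main_nat ht G hfree Sᶜ hSc
  rw [compl_compl] at h2nat
  have hsumA : ∑ v ∈ S, G.degree v = G.edgeFinset.card := sum_degree_side G S hS
  have hsumB : ∑ v ∈ Sᶜ, G.degree v = G.edgeFinset.card := sum_degree_side G Sᶜ hSc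
  have hab : S.card + Sᶜ.card = n := by
    rw [Finset.card_add_card_compl]; simp
  have hncard : G.edgeSet.ncard = G.edgeFinset.card := by
    rw [← SimpleGraph.coe_edgeFinset, Set.ncard_coe_finset]
  rw [hncard]
  -- Cauchy–Schwarz on each side
  have cauchy : ∀ (W : Finset (Fin n)), (∑ v ∈ W, G.degree v = G.edgeFinset.card) →
      ((G.edgeFinset.card : ℝ)) ^ 2 ≤ (W.card : ℝ) * ∑ v ∈ W, (G.degree v : ℝ) ^ 2 := by
    intro W hW
    have hcs := Finset.sum_mul_sq_le_sq_mul_sq W (fun _ => (1:ℝ)) (fun v => (G.degree v : ℝ))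
    simp only [one_mul, one_pow] at hcs
    have h1 : (∑ v ∈ W, (G.degree v : ℝ)) = (G.edgeFinset.card : ℝ) := by
      rw [← hW]; push_cast; rfl
    have h2 : (∑ _v ∈ W, (1:ℝ)) = (W.card : ℝ) := by simp
    rw [h1, h2] at hcs
    exact hcs
  have hcA := cauchy S hsumA
  have hcB := cauchy Sᶜ hsumB
  -- cast the nat bounds
  have h1R : (∑ v ∈ Sᶜ, (G.degree v : ℝ) ^ 2)
      ≤ t * (S.card : ℝ) ^ 2 + t * (G.edgeFinset.card : ℝ) := by
    have := h1nat
    have hcast : (∑ v ∈ Sᶜ, (G.degree v : ℝ) ^ 2)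
        = ((∑ v ∈ Sᶜ, G.degree v ^ 2 : ℕ) : ℝ) := by push_cast; rfl
    rw [hcast]
    push_cast
    exact_mod_cast this
  have h2R : (∑ v ∈ S, (G.degree v : ℝ) ^ 2)
      ≤ t * (Sᶜ.card : ℝ) ^ 2 + t * (G.edgeFinset.card : ℝ) := by
    have hcast : (∑ v ∈ S, (G.degree v : ℝ) ^ 2)
        = ((∑ v ∈ S, G.degree v ^ 2 : ℕ) : ℝ) := by push_cast; rfl
    rw [hcast]
    exact_mod_cast h2nat
  have habR : (S.card : ℝ) + (Sᶜ.card : ℝ) = (n : ℝ) := by exact_mod_cast hab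
  set a : ℝ := (S.card : ℝ)
  set b : ℝ := (Sᶜ.card : ℝ)
  set e : ℝ := (G.edgeFinset.card : ℝ)
  have ha : 0 ≤ a := Nat.cast_nonneg _
  have hb : 0 ≤ b := Nat.cast_nonneg _
  have he : 0 ≤ e := Nat.cast_nonneg _
  have hbig1 : e ^ 2 ≤ t * (a ^ 2 * b) + t * (e * b) := by
    have step := mul_le_mul_of_nonneg_left h1R hb
    calc e ^ 2 ≤ b * ∑ v ∈ Sᶜ, (G.degree v : ℝ) ^ 2 := hcB
      _ ≤ b * (t * a ^ 2 + t * e) := step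
      _ = t * (a ^ 2 * b) + t * (e * b) := by ring
  have hbig2 : e ^ 2 ≤ t * (b ^ 2 * a) + t * (e * a) := by
    have step := mul_le_mul_of_nonneg_left h2R ha
    calc e ^ 2 ≤ a * ∑ v ∈ S, (G.degree v : ℝ) ^ 2 := hcA
      _ ≤ a * (t * b ^ 2 + t * e) := step
      _ = t * (b ^ 2 * a) + t * (e * a) := by ring
  exact hN n hn a b e ha hb he habR hbig1 hbig2
end

section
/- For every ε > 0 there exists N such that for all n ≥ N, every bipartite graph G on n vertices that contains no subgraph isomorphic to B_2 satisfies e(G) ≤ (0.468 + ε)·n^{3/2}. (That is, ex_bip(n, B_2) ≤ 0.468·(1+o(1))·n^{3/2}.) -/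
open SimpleGraph

lemma fin2_eq {a b c : Fin 2} (h1 : a ≠ c) (h2 : b ≠ c) : a = b := by
  fin_cases a <;> fin_cases b <;> fin_cases c <;> simp_all

section Main
variable {n : ℕ} {G : SimpleGraph (Fin n)}

lemma lemM (hfree : ¬ ContainsCopy (Bgraph 2) G) (C : G.Coloring (Fin 2))
    {u y1 y2 y3 x2 x3 : Fin n}
    (huy1 : G.Adj u y1) (huy2 : G.Adj u y2) (huy3 : G.Adj u y3)
    (hx2y1 : G.Adj x2 y1) (hx2y2 : G.Adj x2 y2)
    (hx3y1 : G.Adj x3 y1) (hx3y3 : G.Adj x3 y3)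
    (hx2u : x2 ≠ u) (hx3u : x3 ≠ u)
    (h23 : y2 ≠ y3) (h12 : y1 ≠ y2) (h13 : y1 ≠ y3) : x2 = x3 := by
  by_contra hx23
  -- colors
  have cx2 : C x2 = C u := fin2_eq (C.valid hx2y1) (C.valid huy1)
  have cx3 : C x3 = C u := fin2_eq (C.valid hx3y1) (C.valid huy1)
  have cy2 : C y2 ≠ C u := fun h => (C.valid huy2) h.symm
  have cy3 : C y3 ≠ C u := fun h => (C.valid huy3) h.symm
  have hx2y3 : x2 ≠ y3 := fun h => cy3 (h ▸ cx2)
  have hx3y2 : x3 ≠ y2 := fun h => cy2 (h ▸ cx3)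
  apply hfree
  refine ⟨fun z => if z.1 = 0 then (match z.2 with | .inl _ => u | .inr t => if t = 0 then y2 else y3)
                 else (match z.2 with | .inl _ => y1 | .inr t => if t = 0 then x2 else x3), ?_, ?_⟩
  · intro a b hab
    have hu1 := G.ne_of_adj huy1
    have hu2 := G.ne_of_adj huy2
    have hu3 := G.ne_of_adj huy3
    have h21 := G.ne_of_adj hx2y1
    have h22 := G.ne_of_adj hx2y2
    have h31 := G.ne_of_adj hx3y1
    have h33 := G.ne_of_adj hx3y3
    fin_cases a <;> fin_cases b <;> simp_all
  · intro a b hab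
    rw [Bgraph, SimpleGraph.boxProd_adj] at hab
    fin_cases a <;> fin_cases b <;> simp_all [G.adj_symm, adj_comm]
      <;> first
        | exact huy1 | exact huy1.symm | exact huy2 | exact huy2.symm
        | exact huy3 | exact huy3.symm | exact hx2y1 | exact hx2y1.symm
        | exact hx2y2 | exact hx2y2.symm | exact hx3y1 | exact hx3y1.symm
        | exact hx3y3 | exact hx3y3.symm
end Main

section Defs
variable {n : ℕ} (G : SimpleGraph (Fin n)) [DecidableRel G.Adj] (C : G.Coloring (Fin 2))

def side (i : Fin 2) : Finset (Fin n) := Finset.univ.filter (fun v => C v = i)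

def Yf (s : Finset (Fin n)) (p : Finset (Fin n)) : Finset (Fin n) :=
  s.filter (fun y => ∀ u ∈ p, G.Adj u y)

def heavyP (i j : Fin 2) : Finset (Finset (Fin n)) :=
  ((side G C i).powersetCard 2).filter (fun p => 3 ≤ (Yf G (side G C j) p).card)

def Uset (i j : Fin 2) (u : Fin n) : Finset (Fin n) :=
  ((heavyP G C i j).filter (fun p => u ∈ p)).biUnion (fun p => Yf G (side G C j) p)

def codset (i : Fin 2) (P : Fin n × Fin n) : Finset (Fin n) :=
  (side G C i).filter (fun w => G.Adj w P.1 ∧ G.Adj w P.2)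

lemma mem_side {i v} : v ∈ side G C i ↔ C v = i := by simp [side]

lemma side_opp {i j : Fin 2} (hij : i ≠ j) {u v} (hu : u ∈ side G C i) (h : G.Adj u v) :
    v ∈ side G C j := by
  rw [mem_side] at *
  exact fin2_eq (fun hc => C.valid h (hu.trans hc.symm)) (Ne.symm hij)
  
lemma nbr_sub_side {i j : Fin 2} (hij : i ≠ j) {u} (hu : u ∈ side G C i) :
    G.neighborFinset u ⊆ side G C j := fun v hv => side_opp G C hij hu ((mem_neighborFinset _ _ _).1 hv)

end Defs
section Struct
variable {α : Type*} [DecidableEq α]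

lemma pick_avoid (s t : Finset α) (h : t.card < s.card) : ∃ y ∈ s, y ∉ t := by
  by_contra hc
  push_neg at hc
  exact absurd (Finset.card_le_card hc) (not_le.2 h)

lemma pair_other {s : Finset α} {u : α} (h : s.card = 2) (hu : u ∈ s) :
    ∃ x, x ≠ u ∧ s = {u, x} := by
  obtain ⟨a, b, hab, rfl⟩ := Finset.card_eq_two.1 h
  rcases Finset.mem_insert.1 hu with rfl | hb
  · exact ⟨b, fun h => hab h.symm, rfl⟩
  · rcases Finset.mem_singleton.1 hb with rfl
    exact ⟨a, hab, by rw [Finset.pair_comm]⟩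

end Struct

section Core
variable {n : ℕ} {G : SimpleGraph (Fin n)} [DecidableRel G.Adj] {C : G.Coloring (Fin 2)}
variable (hfree : ¬ ContainsCopy (Bgraph 2) G) {i j : Fin 2} (hij : i ≠ j)

lemma mem_Yf {s p y} : y ∈ Yf G s p ↔ y ∈ s ∧ ∀ u ∈ p, G.Adj u y := Finset.mem_filter

lemma mem_heavyP {p} : p ∈ heavyP G C i j ↔
    (p ⊆ side G C i ∧ p.card = 2) ∧ 3 ≤ (Yf G (side G C j) p).card := by
  rw [heavyP, Finset.mem_filter, Finset.mem_powersetCard]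

lemma mem_codset {P : Fin n × Fin n} {w} :
    w ∈ codset G C i P ↔ w ∈ side G C i ∧ G.Adj w P.1 ∧ G.Adj w P.2 := Finset.mem_filter

include hfree in
lemma codset_eq_of_heavy {p : Finset (Fin n)} {P : Fin n × Fin n}
    (hp : p ∈ heavyP G C i j)
    (h1 : P.1 ∈ Yf G (side G C j) p) (h2 : P.2 ∈ Yf G (side G C j) p)
    (h12 : P.1 ≠ P.2) : codset G C i P = p := by
  obtain ⟨⟨hpsub, hpcard⟩, hpY⟩ := mem_heavyP.1 hp
  obtain ⟨u, x, hux, rfl⟩ := Finset.card_eq_two.1 hpcard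
  have hu : u ∈ ({u, x} : Finset (Fin n)) := Finset.mem_insert_self _ _
  have hx : x ∈ ({u, x} : Finset (Fin n)) := by simp
  have a1u := (mem_Yf.1 h1).2 u hu
  have a1x := (mem_Yf.1 h1).2 x hx
  have a2u := (mem_Yf.1 h2).2 u hu
  have a2x := (mem_Yf.1 h2).2 x hx
  ext w
  constructor
  · intro hw
    obtain ⟨hwside, hw1, hw2⟩ := mem_codset.1 hw
    by_contra hwp
    have h2le : ({P.1, P.2} : Finset (Fin n)).card ≤ 2 :=
      (Finset.card_insert_le _ _).trans (by simp)
    obtain ⟨y'', hy''Y, hy''P⟩ := pick_avoid (Yf G (side G C j) ({u, x} : Finset (Fin n)))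
      {P.1, P.2} (by omega)
    have hy''u := (mem_Yf.1 hy''Y).2 u hu
    have hy''x := (mem_Yf.1 hy''Y).2 x hx
    have hne1 : P.1 ≠ y'' := fun h => hy''P (by simp [← h])
    have hne2 : y'' ≠ P.2 := fun h => hy''P (by simp [h])
    have hwu : w ≠ u := fun h => hwp (h ▸ hu)
    have hwx : x = w := lemM hfree C a1u hy''u a2u a1x hy''x hw1 hw2 hux.symm hwu hne2 hne1 h12
    exact hwp (hwx ▸ hx)
  · intro hwp
    refine mem_codset.2 ⟨hpsub hwp, ?_, ?_⟩
    · exact (mem_Yf.1 h1).2 w hwp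
    · exact (mem_Yf.1 h2).2 w hwp

include hfree in
lemma heavy_disjoint {u : Fin n} {p p' : Finset (Fin n)}
    (hp : p ∈ heavyP G C i j) (hp' : p' ∈ heavyP G C i j)
    (hu : u ∈ p) (hu' : u ∈ p') {y : Fin n}
    (hy : y ∈ Yf G (side G C j) p) (hy' : y ∈ Yf G (side G C j) p') : p = p' := by
  obtain ⟨⟨hpsub, hpcard⟩, hpY⟩ := mem_heavyP.1 hp
  obtain ⟨⟨hpsub', hpcard'⟩, hpY'⟩ := mem_heavyP.1 hp'
  obtain ⟨x, hxu, rfl⟩ := pair_other hpcard hu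
  obtain ⟨x', hxu', rfl⟩ := pair_other hpcard' hu'
  by_cases hxx : x = x'
  · rw [hxx]
  have hxm : x ∈ ({u, x} : Finset (Fin n)) := by simp
  have hxm' : x' ∈ ({u, x'} : Finset (Fin n)) := by simp
  obtain ⟨y2, hy2Y, hy2P⟩ := pick_avoid (Yf G (side G C j) ({u, x} : Finset (Fin n)))
    {y} (by simp; omega)
  have h2le : ({y, y2} : Finset (Fin n)).card ≤ 2 := (Finset.card_insert_le _ _).trans (by simp)
  obtain ⟨y3, hy3Y, hy3P⟩ := pick_avoid (Yf G (side G C j) ({u, x'} : Finset (Fin n)))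
    {y, y2} (by omega)
  have hyy2 : y ≠ y2 := fun h => hy2P (by simp [h])
  have hyy3 : y ≠ y3 := fun h => hy3P (by simp [← h])
  have hy23 : y2 ≠ y3 := fun h => hy3P (by simp [← h])
  exact absurd (lemM hfree C
    ((mem_Yf.1 hy).2 u hu) ((mem_Yf.1 hy2Y).2 u (by simp)) ((mem_Yf.1 hy3Y).2 u (by simp))
    ((mem_Yf.1 hy).2 x hxm) ((mem_Yf.1 hy2Y).2 x hxm)
    ((mem_Yf.1 hy').2 x' hxm') ((mem_Yf.1 hy3Y).2 x' hxm')
    hxu hxu' hy23 hyy2 hyy3) hxx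

include hfree hij in
lemma exists_heavy {u y y2 y3 : Fin n} (h23 : y2 ≠ y3) (h12 : y ≠ y2) (h13 : y ≠ y3)
    (hc2 : 2 ≤ (codset G C i (y, y2)).card) (hc3 : 2 ≤ (codset G C i (y, y3)).card)
    (hu2 : u ∈ codset G C i (y, y2)) (hu3 : u ∈ codset G C i (y, y3)) :
    ∃ p ∈ heavyP G C i j, y ∈ Yf G (side G C j) p ∧ y2 ∈ Yf G (side G C j) p ∧
      y3 ∈ Yf G (side G C j) p := by
  obtain ⟨x2, hx2m, hx2u⟩ := pick_avoid (codset G C i (y, y2)) {u} (by simp; omega)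
  obtain ⟨x3, hx3m, hx3u⟩ := pick_avoid (codset G C i (y, y3)) {u} (by simp; omega)
  rw [Finset.mem_singleton] at hx2u hx3u
  obtain ⟨hx2s, hx2a, hx2b⟩ := mem_codset.1 hx2m
  obtain ⟨hx3s, hx3a, hx3b⟩ := mem_codset.1 hx3m
  obtain ⟨hus, hua, hub⟩ := mem_codset.1 hu2
  obtain ⟨-, -, huc⟩ := mem_codset.1 hu3
  have hxx : x2 = x3 := lemM hfree C hua hub huc hx2a hx2b hx3a hx3b hx2u hx3u h23 h12 h13
  subst hxx
  have hyB : y ∈ side G C j := side_opp G C hij hus hua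
  have hy2B : y2 ∈ side G C j := side_opp G C hij hus hub
  have hy3B : y3 ∈ side G C j := side_opp G C hij hus huc
  have hadj : ∀ z ∈ ({u, x2} : Finset (Fin n)), G.Adj z y ∧ G.Adj z y2 ∧ G.Adj z y3 := by
    intro z hz
    rcases Finset.mem_insert.1 hz with rfl | hz
    · exact ⟨hua, hub, huc⟩
    · rcases Finset.mem_singleton.1 hz with rfl
      exact ⟨hx2a, hx2b, hx3b⟩
  have hYmem : ∀ w ∈ ({y, y2, y3} : Finset (Fin n)), w ∈ Yf G (side G C j) ({u, x2} : Finset (Fin n)) := by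
    intro w hw
    simp only [Finset.mem_insert, Finset.mem_singleton] at hw
    rcases hw with rfl | rfl | rfl
    · exact mem_Yf.2 ⟨hyB, fun z hz => (hadj z hz).1⟩
    · exact mem_Yf.2 ⟨hy2B, fun z hz => (hadj z hz).2.1⟩
    · exact mem_Yf.2 ⟨hy3B, fun z hz => (hadj z hz).2.2⟩
  refine ⟨{u, x2}, mem_heavyP.2 ⟨⟨?_, ?_⟩, ?_⟩, ?_, ?_, ?_⟩
  · intro z hz
    rcases Finset.mem_insert.1 hz with rfl | hz
    · exact hus
    · rcases Finset.mem_singleton.1 hz with rfl; exact hx2s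
  · rw [Finset.card_insert_of_notMem (by simp [Ne.symm hx2u]), Finset.card_singleton]
  · calc (3 : ℕ) = ({y, y2, y3} : Finset (Fin n)).card := by
          rw [Finset.card_insert_of_notMem (by simp [h12, h13]),
            Finset.card_insert_of_notMem (by simp [h23]), Finset.card_singleton]
      _ ≤ _ := Finset.card_le_card (fun w hw => hYmem w hw)
  · exact hYmem y (by simp)
  · exact hYmem y2 (by simp)
  · exact hYmem y3 (by simp)

include hfree in
lemma not_both_heavy {u y : Fin n}
    (hA : y ∈ Uset G C i j u) (hB : u ∈ Uset G C j i y) : False := by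
  obtain ⟨p, hpm, hyp⟩ := Finset.mem_biUnion.1 hA
  obtain ⟨q, hqm, huq⟩ := Finset.mem_biUnion.1 hB
  obtain ⟨hp, hup⟩ := Finset.mem_filter.1 hpm
  obtain ⟨hq, hyq⟩ := Finset.mem_filter.1 hqm
  obtain ⟨⟨hpsub, hpcard⟩, hpY⟩ := mem_heavyP.1 hp
  obtain ⟨⟨hqsub, hqcard⟩, hqY⟩ := mem_heavyP.1 hq
  obtain ⟨x, hxu, rfl⟩ := pair_other hpcard hup
  obtain ⟨y', hy'y, rfl⟩ := pair_other hqcard hyq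
  have h2le : ({y, y'} : Finset (Fin n)).card ≤ 2 := (Finset.card_insert_le _ _).trans (by simp)
  have h2le' : ({u, x} : Finset (Fin n)).card ≤ 2 := (Finset.card_insert_le _ _).trans (by simp)
  obtain ⟨y2, hy2Y, hy2P⟩ := pick_avoid (Yf G (side G C j) ({u, x} : Finset (Fin n)))
    {y, y'} (by omega)
  obtain ⟨u2, hu2Y, hu2P⟩ := pick_avoid (Yf G (side G C i) ({y, y'} : Finset (Fin n)))
    {u, x} (by omega)
  have hyy2 : y ≠ y2 := fun h => hy2P (by simp [← h])
  have hy2y' : y2 ≠ y' := fun h => hy2P (by simp [h])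
  have hyy' : y ≠ y' := Ne.symm hy'y
  have hu2u : u2 ≠ u := fun h => hu2P (by simp [h])
  have hu2x : u2 ≠ x := fun h => hu2P (by simp [h])
  have hadjuy : G.Adj u y := ((mem_Yf.1 hyp).2 u (by simp))
  have hadjuy2 : G.Adj u y2 := ((mem_Yf.1 hy2Y).2 u (by simp))
  have hadjuy' : G.Adj u y' := ((mem_Yf.1 huq).2 y' (by simp)).symm
  have hadjxy : G.Adj x y := ((mem_Yf.1 hyp).2 x (by simp))
  have hadjxy2 : G.Adj x y2 := ((mem_Yf.1 hy2Y).2 x (by simp))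
  have hadju2y : G.Adj u2 y := ((mem_Yf.1 hu2Y).2 y (by simp)).symm
  have hadju2y' : G.Adj u2 y' := ((mem_Yf.1 hu2Y).2 y' (by simp)).symm
  exact hu2x (lemM hfree C hadjuy hadjuy2 hadjuy' hadjxy hadjxy2 hadju2y hadju2y'
    hxu hu2u hy2y' hyy2 hyy').symm

end Core
section Count
variable {n : ℕ} {G : SimpleGraph (Fin n)} [DecidableRel G.Adj] {C : G.Coloring (Fin 2)}
variable (hfree : ¬ ContainsCopy (Bgraph 2) G) {i j : Fin 2} (hij : i ≠ j)

include hij in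
lemma offDiag_nbr_eq {u : Fin n} (hu : u ∈ side G C i) :
    (G.neighborFinset u).offDiag
      = (side G C j).offDiag.filter (fun P => G.Adj u P.1 ∧ G.Adj u P.2) := by
  ext ⟨y, y'⟩
  simp only [Finset.mem_offDiag, Finset.mem_filter, mem_neighborFinset]
  constructor
  · rintro ⟨h1, h2, h3⟩
    exact ⟨⟨side_opp G C hij hu h1, side_opp G C hij hu h2, h3⟩, h1, h2⟩
  · rintro ⟨⟨_, _, h3⟩, h4, h5⟩
    exact ⟨h4, h5, h3⟩

include hij in
lemma count_swap :
    ∑ u ∈ side G C i, (G.neighborFinset u).offDiag.card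
      = ∑ P ∈ (side G C j).offDiag, (codset G C i P).card := by
  have h1 : ∀ u ∈ side G C i, (G.neighborFinset u).offDiag.card
      = ∑ P ∈ (side G C j).offDiag, if G.Adj u P.1 ∧ G.Adj u P.2 then 1 else 0 := by
    intro u hu
    rw [offDiag_nbr_eq hij hu, Finset.card_filter]
  rw [Finset.sum_congr rfl h1, Finset.sum_comm]
  refine Finset.sum_congr rfl (fun P _ => ?_)
  rw [codset, Finset.card_filter]

/-- the set of "heavy" ordered pairs on side `j`. -/
def TH (G : SimpleGraph (Fin n)) [DecidableRel G.Adj] (C : G.Coloring (Fin 2))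
    (i j : Fin 2) : Finset (Fin n × Fin n) :=
  (side G C j).offDiag.filter
    (fun P => ∃ p ∈ heavyP G C i j, P.1 ∈ Yf G (side G C j) p ∧ P.2 ∈ Yf G (side G C j) p)

include hfree in
lemma TH_cod {P : Fin n × Fin n} (hP : P ∈ TH G C i j) : (codset G C i P).card = 2 := by
  obtain ⟨hPT, p, hp, h1, h2⟩ := Finset.mem_filter.1 hP
  rw [codset_eq_of_heavy hfree hp h1 h2 (Finset.mem_offDiag.1 hPT).2.2]
  exact (mem_heavyP.1 hp).1.2

include hfree in
lemma TH_card_le :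
    (TH G C i j).card ≤ ∑ p ∈ heavyP G C i j, (Yf G (side G C j) p).offDiag.card := by
  rw [Finset.card_eq_sum_card_fiberwise (f := fun P => codset G C i P) (t := heavyP G C i j)
    (fun P hP => by
      obtain ⟨hPT, p, hp, h1, h2⟩ := Finset.mem_filter.1 hP
      show codset G C i P ∈ heavyP G C i j
      rw [codset_eq_of_heavy hfree hp h1 h2 (Finset.mem_offDiag.1 hPT).2.2]
      exact hp)]
  refine Finset.sum_le_sum (fun p hp => Finset.card_le_card ?_)
  intro P hP
  obtain ⟨hPth, hPf⟩ := Finset.mem_filter.1 hP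
  obtain ⟨hPT, _⟩ := Finset.mem_filter.1 hPth
  have hPo := Finset.mem_offDiag.1 hPT
  refine Finset.mem_offDiag.2 ⟨?_, ?_, hPo.2.2⟩
  · exact mem_Yf.2 ⟨hPo.1, fun w hw => (mem_codset.1 (hPf ▸ hw)).2.1⟩
  · exact mem_Yf.2 ⟨hPo.2.1, fun w hw => (mem_codset.1 (hPf ▸ hw)).2.2⟩

end Count
section Count2
variable {n : ℕ} {G : SimpleGraph (Fin n)} [DecidableRel G.Adj] {C : G.Coloring (Fin 2)}
variable (hfree : ¬ ContainsCopy (Bgraph 2) G) {i j : Fin 2} (hij : i ≠ j)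

/-- ordered pairs with codegree ≥ 2 not inside a heavy clique -/
def TS (G : SimpleGraph (Fin n)) [DecidableRel G.Adj] (C : G.Coloring (Fin 2))
    (i j : Fin 2) : Finset (Fin n × Fin n) :=
  (side G C j).offDiag.filter
    (fun P => (¬ ∃ p ∈ heavyP G C i j, P.1 ∈ Yf G (side G C j) p ∧ P.2 ∈ Yf G (side G C j) p)
      ∧ 2 ≤ (codset G C i P).card)

include hfree hij in
lemma TS_sum_le :
    ∑ P ∈ TS G C i j, (codset G C i P).card ≤ ∑ u ∈ side G C i, G.degree u := by
  have h1 : ∀ P ∈ TS G C i j, (codset G C i P).card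
      = ∑ u ∈ side G C i, if G.Adj u P.1 ∧ G.Adj u P.2 then 1 else 0 := by
    intro P _
    rw [codset, Finset.card_filter]
  rw [Finset.sum_congr rfl h1, Finset.sum_comm]
  refine Finset.sum_le_sum (fun u hu => ?_)
  rw [← Finset.card_filter]
  have : ((TS G C i j).filter (fun P => G.Adj u P.1 ∧ G.Adj u P.2)).card
      ≤ (G.neighborFinset u).card := by
    refine Finset.card_le_card_of_injOn Prod.fst ?_ ?_
    · intro P hP
      exact (mem_neighborFinset _ _ _).2 (Finset.mem_filter.1 hP).2.1
    · rintro ⟨y, y2⟩ hP ⟨y', y3⟩ hP' (heq : y = y')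
      subst heq
      obtain ⟨hPts, hadj1, hadj2⟩ := Finset.mem_filter.1 hP
      obtain ⟨hPts', hadj1', hadj3⟩ := Finset.mem_filter.1 hP'
      obtain ⟨hPT, hnh, hc2⟩ := Finset.mem_filter.1 hPts
      obtain ⟨hPT', hnh', hc3⟩ := Finset.mem_filter.1 hPts'
      by_contra hne
      have h23 : y2 ≠ y3 := by simpa using hne
      have h12 : y ≠ y2 := (Finset.mem_offDiag.1 hPT).2.2
      have h13 : y ≠ y3 := (Finset.mem_offDiag.1 hPT').2.2
      have hum : u ∈ codset G C i (y, y2) := mem_codset.2 ⟨hu, hadj1, hadj2⟩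
      have hum' : u ∈ codset G C i (y, y3) := mem_codset.2 ⟨hu, hadj1', hadj3⟩
      obtain ⟨p, hp, hy, hy2, _⟩ := exists_heavy hfree hij h23 h12 h13 hc2 hc3 hum hum'
      exact hnh ⟨p, hp, hy, hy2⟩
  simpa [SimpleGraph.card_neighborFinset_eq_degree] using this

include hfree in
lemma clique_sum :
    ∑ p ∈ heavyP G C i j, 2 * (Yf G (side G C j) p).offDiag.card
      ≤ ∑ u ∈ side G C i, (Uset G C i j u).offDiag.card := by
  have h1 : ∀ p ∈ heavyP G C i j, 2 * (Yf G (side G C j) p).offDiag.card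
      = ∑ u ∈ side G C i, if u ∈ p then (Yf G (side G C j) p).offDiag.card else 0 := by
    intro p hp
    rw [Finset.sum_ite_mem, Finset.inter_comm,
      (Finset.inter_eq_left).2 (mem_heavyP.1 hp).1.1, Finset.sum_const, (mem_heavyP.1 hp).1.2,
      smul_eq_mul]
  rw [Finset.sum_congr rfl h1, Finset.sum_comm]
  refine Finset.sum_le_sum (fun u _ => ?_)
  rw [← Finset.sum_filter]
  have hdisj : ∀ p ∈ (heavyP G C i j).filter (fun p => u ∈ p),
      ∀ p' ∈ (heavyP G C i j).filter (fun p => u ∈ p), p ≠ p' →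
      Disjoint ((Yf G (side G C j) p).offDiag) ((Yf G (side G C j) p').offDiag) := by
    intro p hp p' hp' hne
    rw [Finset.disjoint_left]
    intro P h1 h2
    obtain ⟨hpm, hpu⟩ := Finset.mem_filter.1 hp
    obtain ⟨hpm', hpu'⟩ := Finset.mem_filter.1 hp'
    exact hne (heavy_disjoint hfree hpm hpm' hpu hpu'
      (Finset.mem_offDiag.1 h1).1 (Finset.mem_offDiag.1 h2).1)
  rw [← Finset.card_biUnion hdisj]
  refine Finset.card_le_card ?_
  intro P hP
  obtain ⟨p, hp, hPo⟩ := Finset.mem_biUnion.1 hP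
  have ho := Finset.mem_offDiag.1 hPo
  exact Finset.mem_offDiag.2
    ⟨Finset.mem_biUnion.2 ⟨p, hp, ho.1⟩, Finset.mem_biUnion.2 ⟨p, hp, ho.2.1⟩, ho.2.2⟩

lemma Uset_sub_nbr {u : Fin n} : Uset G C i j u ⊆ G.neighborFinset u := by
  intro y hy
  obtain ⟨p, hp, hyY⟩ := Finset.mem_biUnion.1 hy
  exact (mem_neighborFinset _ _ _).2 ((mem_Yf.1 hyY).2 u (Finset.mem_filter.1 hp).2)

lemma Uset_sub_side : ∀ u : Fin n, Uset G C i j u ⊆ side G C j := by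
  intro u y hy
  obtain ⟨p, _, hyY⟩ := Finset.mem_biUnion.1 hy
  exact (mem_Yf.1 hyY).1

include hfree hij in
lemma budget :
    (∑ u ∈ side G C i, (Uset G C i j u).card) + (∑ y ∈ side G C j, (Uset G C j i y).card)
      ≤ ∑ u ∈ side G C i, G.degree u := by
  have h1 : ∀ u ∈ side G C i, (Uset G C i j u).card
      = ∑ y ∈ side G C j, if y ∈ Uset G C i j u then 1 else 0 := by
    intro u _
    rw [← Finset.card_filter, Finset.filter_mem_eq_inter, Finset.inter_comm,
      (Finset.inter_eq_left).2 (Uset_sub_side u)]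
  have h2 : ∀ y ∈ side G C j, (Uset G C j i y).card
      = ∑ u ∈ side G C i, if u ∈ Uset G C j i y then 1 else 0 := by
    intro y _
    rw [← Finset.card_filter, Finset.filter_mem_eq_inter, Finset.inter_comm,
      (Finset.inter_eq_left).2 (Uset_sub_side y)]
  have h2' : (∑ y ∈ side G C j, (Uset G C j i y).card)
      = ∑ u ∈ side G C i, ∑ y ∈ side G C j, (if u ∈ Uset G C j i y then 1 else 0) := by
    rw [Finset.sum_congr rfl h2]
    exact Finset.sum_comm
  rw [Finset.sum_congr rfl h1, h2', ← Finset.sum_add_distrib]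
  have h3 : ∀ u ∈ side G C i, G.degree u
      = ∑ y ∈ side G C j, if y ∈ G.neighborFinset u then 1 else 0 := by
    intro u hu
    rw [← Finset.card_filter, Finset.filter_mem_eq_inter, Finset.inter_comm,
      (Finset.inter_eq_left).2 (nbr_sub_side G C hij hu), SimpleGraph.card_neighborFinset_eq_degree]
  rw [Finset.sum_congr rfl h3]
  refine Finset.sum_le_sum (fun u hu => ?_)
  rw [← Finset.sum_add_distrib]
  refine Finset.sum_le_sum (fun y hy => ?_)
  by_cases hA : y ∈ Uset G C i j u
  · by_cases hB : u ∈ Uset G C j i y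
    · exact absurd hB (fun hB => not_both_heavy hfree hA hB)
    · simp [hA, hB, Uset_sub_nbr hA]
  · by_cases hB : u ∈ Uset G C j i y
    · have : y ∈ G.neighborFinset u := by
        rw [mem_neighborFinset]
        exact ((mem_neighborFinset _ _ _).1 (Uset_sub_nbr hB)).symm
      simp [hA, hB, this]
    · simp [hA, hB]

end Count2
section Astar
variable {n : ℕ} {G : SimpleGraph (Fin n)} [DecidableRel G.Adj] {C : G.Coloring (Fin 2)}
variable (hfree : ¬ ContainsCopy (Bgraph 2) G) {i j : Fin 2} (hij : i ≠ j)

include hfree hij in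
lemma Astar :
    2 * ∑ u ∈ side G C i, (G.neighborFinset u).offDiag.card
      ≤ 2 * (side G C j).offDiag.card + ∑ u ∈ side G C i, (Uset G C i j u).offDiag.card
        + 2 * ∑ u ∈ side G C i, G.degree u := by
  classical
  set T := (side G C j).offDiag with hT
  set φ : Fin n × Fin n → Prop := fun P =>
    ∃ p ∈ heavyP G C i j, P.1 ∈ Yf G (side G C j) p ∧ P.2 ∈ Yf G (side G C j) p with hφ
  set ψ : Fin n × Fin n → Prop := fun P => 2 ≤ (codset G C i P).card with hψ
  have hsplit1 : ∑ P ∈ T, (codset G C i P).card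
      = (∑ P ∈ T.filter φ, (codset G C i P).card)
        + ∑ P ∈ T.filter (fun P => ¬ φ P), (codset G C i P).card :=
    (Finset.sum_filter_add_sum_filter_not T φ _).symm
  have hTHeq : T.filter φ = TH G C i j := rfl
  have hTH : ∑ P ∈ T.filter φ, (codset G C i P).card = 2 * (TH G C i j).card := by
    rw [hTHeq, Finset.sum_congr rfl (fun P hP => TH_cod hfree hP), Finset.sum_const,
      smul_eq_mul, mul_comm]
  have hsplit2 : ∑ P ∈ T.filter (fun P => ¬ φ P), (codset G C i P).card
      = (∑ P ∈ (T.filter (fun P => ¬ φ P)).filter ψ, (codset G C i P).card)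
        + ∑ P ∈ (T.filter (fun P => ¬ φ P)).filter (fun P => ¬ ψ P), (codset G C i P).card :=
    (Finset.sum_filter_add_sum_filter_not _ ψ _).symm
  have hTSeq : (T.filter (fun P => ¬ φ P)).filter ψ = TS G C i j := by
    ext P
    simp only [Finset.mem_filter, TS, hφ, hψ, hT]
    tauto
  have hlight : ∑ P ∈ (T.filter (fun P => ¬ φ P)).filter (fun P => ¬ ψ P),
      (codset G C i P).card
      ≤ ((T.filter (fun P => ¬ φ P)).filter (fun P => ¬ ψ P)).card := by
    refine (Finset.sum_le_card_nsmul _ _ 1 (fun P hP => ?_)).trans_eq (by rw [smul_eq_mul, mul_one])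
    have := (Finset.mem_filter.1 hP).2
    omega
  have hcards : (TH G C i j).card
        + ((T.filter (fun P => ¬ φ P)).filter (fun P => ¬ ψ P)).card ≤ T.card := by
    rw [← hTHeq]
    have h1 := Finset.card_filter_add_card_filter_not (s := T) (p := φ)
    have h2 : ((T.filter (fun P => ¬ φ P)).filter (fun P => ¬ ψ P)).card
        ≤ (T.filter (fun P => ¬ φ P)).card := Finset.card_filter_le _ _
    omega
  have hmain : ∑ P ∈ T, (codset G C i P).card
      ≤ T.card + (TH G C i j).card + ∑ u ∈ side G C i, G.degree u := by
    have := TS_sum_le (C := C) hfree hij (i := i) (j := j)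
    rw [hsplit1, hTH, hsplit2, hTSeq]
    omega
  have hswap := count_swap (G := G) (C := C) hij (i := i) (j := j)
  have hTHle := TH_card_le (C := C) hfree (i := i) (j := j)
  have hclique := clique_sum (C := C) hfree (i := i) (j := j)
  have h2ton : 2 * (TH G C i j).card ≤ ∑ u ∈ side G C i, (Uset G C i j u).offDiag.card := by
    calc 2 * (TH G C i j).card
        ≤ 2 * ∑ p ∈ heavyP G C i j, (Yf G (side G C j) p).offDiag.card := by omega
      _ = ∑ p ∈ heavyP G C i j, 2 * (Yf G (side G C j) p).offDiag.card := by
          rw [Finset.mul_sum]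
      _ ≤ _ := hclique
  rw [← hT] at hswap
  rw [hswap]
  omega

end Astar
lemma offDiag_card_real {α : Type*} [DecidableEq α] (s : Finset α) :
    ((s.offDiag.card : ℝ)) = (s.card : ℝ) * s.card - s.card := by
  rw [Finset.offDiag_card]
  have h : s.card ≤ s.card * s.card := by
    rcases Nat.eq_zero_or_pos s.card with h | h
    · simp [h]
    · exact Nat.le_mul_of_pos_left _ h
  rw [Nat.cast_sub h]
  push_cast
  ring

section SideIneq
variable {n : ℕ} {G : SimpleGraph (Fin n)} [DecidableRel G.Adj] {C : G.Coloring (Fin 2)}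
variable (hfree : ¬ ContainsCopy (Bgraph 2) G) {i j : Fin 2} (hij : i ≠ j)

include hfree hij in
lemma side_ineq :
    (∑ u ∈ side G C i, (G.degree u : ℝ))^2
      + ((∑ u ∈ side G C i, (G.degree u : ℝ)) - ∑ u ∈ side G C i, ((Uset G C i j u).card : ℝ))^2
      ≤ ((side G C i).card : ℝ) * (2 * ((side G C j).card : ℝ)^2
          + 4 * ∑ u ∈ side G C i, (G.degree u : ℝ)) := by
  classical
  have hA := Astar (C := C) hfree hij
  -- cast Astar to ℝ
  have hAr : 2 * ∑ u ∈ side G C i, ((G.degree u : ℝ) * G.degree u - G.degree u)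
      ≤ 2 * (((side G C j).card : ℝ) * (side G C j).card - (side G C j).card)
        + ∑ u ∈ side G C i, (((Uset G C i j u).card : ℝ) * (Uset G C i j u).card
            - (Uset G C i j u).card)
        + 2 * ∑ u ∈ side G C i, (G.degree u : ℝ) := by
    have := (Nat.cast_le (α := ℝ)).2 hA
    push_cast at this
    calc 2 * ∑ u ∈ side G C i, ((G.degree u : ℝ) * G.degree u - G.degree u)
        = 2 * ∑ u ∈ side G C i, ((G.neighborFinset u).offDiag.card : ℝ) := by
          refine congrArg _ (Finset.sum_congr rfl (fun u _ => ?_))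
          rw [offDiag_card_real, SimpleGraph.card_neighborFinset_eq_degree]
      _ ≤ 2 * (((side G C j).offDiag.card : ℝ))
            + ∑ u ∈ side G C i, ((Uset G C i j u).offDiag.card : ℝ)
            + 2 * ∑ u ∈ side G C i, (G.degree u : ℝ) := by push_cast; linarith [this]
      _ ≤ _ := by
          rw [offDiag_card_real]
          have h2 : ∑ u ∈ side G C i, ((Uset G C i j u).offDiag.card : ℝ)
              = ∑ u ∈ side G C i, (((Uset G C i j u).card : ℝ) * (Uset G C i j u).card
                - (Uset G C i j u).card) := Finset.sum_congr rfl (fun u _ => offDiag_card_real _)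
          rw [h2]
  -- pointwise bound + Cauchy–Schwarz
  have hpt : ∑ u ∈ side G C i, ((G.degree u : ℝ)^2
        + ((G.degree u : ℝ) - ((Uset G C i j u).card : ℝ))^2)
      ≤ 2 * ((side G C j).card : ℝ)^2 + 4 * ∑ u ∈ side G C i, (G.degree u : ℝ) := by
    have hsum : ∑ u ∈ side G C i, ((G.degree u : ℝ)^2
          + ((G.degree u : ℝ) - ((Uset G C i j u).card : ℝ))^2)
        ≤ ∑ u ∈ side G C i, (2 * ((G.degree u : ℝ) * G.degree u - G.degree u)
            - (((Uset G C i j u).card : ℝ) * (Uset G C i j u).card - (Uset G C i j u).card)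
            + 2 * (G.degree u : ℝ)) := by
      refine Finset.sum_le_sum (fun u _ => ?_)
      have hk : ((Uset G C i j u).card : ℝ) ≤ G.degree u := by
        have := Finset.card_le_card (Uset_sub_nbr (G := G) (C := C) (i := i) (j := j) (u := u))
        rw [SimpleGraph.card_neighborFinset_eq_degree] at this
        exact_mod_cast this
      have hk0 : (0:ℝ) ≤ ((Uset G C i j u).card : ℝ) := Nat.cast_nonneg _
      nlinarith [hk, hk0]
    rw [Finset.sum_add_distrib] at hsum ⊢
    have hexp : ∑ u ∈ side G C i, (2 * ((G.degree u : ℝ) * G.degree u - G.degree u)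
          - (((Uset G C i j u).card : ℝ) * (Uset G C i j u).card - (Uset G C i j u).card)
          + 2 * (G.degree u : ℝ))
        = 2 * ∑ u ∈ side G C i, ((G.degree u : ℝ) * G.degree u - G.degree u)
          - ∑ u ∈ side G C i, (((Uset G C i j u).card : ℝ) * (Uset G C i j u).card
              - (Uset G C i j u).card)
          + 2 * ∑ u ∈ side G C i, (G.degree u : ℝ) := by
      rw [Finset.sum_add_distrib, Finset.sum_sub_distrib, Finset.mul_sum, Finset.mul_sum]
    rw [hexp] at hsum
    have hKpos : (0:ℝ) ≤ ∑ u ∈ side G C i, ((Uset G C i j u).card : ℝ) :=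
      Finset.sum_nonneg (fun u _ => Nat.cast_nonneg _)
    have hb : (0:ℝ) ≤ ((side G C j).card : ℝ) := Nat.cast_nonneg _
    nlinarith [hAr, hsum]
  have hc1 : (∑ u ∈ side G C i, (G.degree u : ℝ))^2
      ≤ ((side G C i).card : ℝ) * ∑ u ∈ side G C i, (G.degree u : ℝ)^2 := by
    exact_mod_cast sq_sum_le_card_mul_sum_sq (s := side G C i) (f := fun u => (G.degree u : ℝ))
  have hc2 : ((∑ u ∈ side G C i, (G.degree u : ℝ)) - ∑ u ∈ side G C i, ((Uset G C i j u).card : ℝ))^2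
      ≤ ((side G C i).card : ℝ)
        * ∑ u ∈ side G C i, ((G.degree u : ℝ) - ((Uset G C i j u).card : ℝ))^2 := by
    rw [← Finset.sum_sub_distrib]
    exact sq_sum_le_card_mul_sum_sq
  have ha : (0:ℝ) ≤ ((side G C i).card : ℝ) := Nat.cast_nonneg _
  calc (∑ u ∈ side G C i, (G.degree u : ℝ))^2
        + ((∑ u ∈ side G C i, (G.degree u : ℝ)) - ∑ u ∈ side G C i, ((Uset G C i j u).card : ℝ))^2
      ≤ ((side G C i).card : ℝ) * (∑ u ∈ side G C i, ((G.degree u : ℝ)^2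
          + ((G.degree u : ℝ) - ((Uset G C i j u).card : ℝ))^2)) := by
        rw [Finset.sum_add_distrib, mul_add]
        exact add_le_add hc1 hc2
    _ ≤ _ := by
        refine mul_le_mul_of_nonneg_left hpt ha

end SideIneq
section Alg
set_option maxHeartbeats 1000000

lemma alg_main {a b e1 e2 K L E nR : ℝ}
    (hnR : a + b = nR) (hdegR : e1 + e2 = 2 * E)
    (hbud1R : K + L ≤ e1) (hbud2R : L + K ≤ e2)
    (ha0 : 0 ≤ a) (hb0 : 0 ≤ b) (he10 : 0 ≤ e1) (he20 : 0 ≤ e2)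
    (hK0 : 0 ≤ K) (hL0 : 0 ≤ L) (hE0 : 0 ≤ E)
    (hs1 : e1^2 + (e1 - K)^2 ≤ a * (2*b^2 + 4*e1))
    (hs2 : e2^2 + (e2 - L)^2 ≤ b * (2*a^2 + 4*e2)) :
    E^2 ≤ nR^3/5 + 4 * nR * E := by
  have hsq : (e1 + e2)^2 = 4 * E^2 := by rw [hdegR]; ring
  have h1 : 2 * E^2 ≤ e1^2 + e2^2 := by nlinarith [sq_nonneg (e1 - e2), hsq]
  have h2 : E^2/2 ≤ (e1 - K)^2 + (e2 - L)^2 := by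
    have hXY : (e1 - K) + (e2 - L) ≥ E := by linarith
    have hX0 : 0 ≤ e1 - K := by linarith
    have hY0 : 0 ≤ e2 - L := by linarith
    nlinarith [sq_nonneg ((e1 - K) - (e2 - L)), hXY, hX0, hY0, hE0]
  have hanb : a ≤ nR := by linarith
  have hbnb : b ≤ nR := by linarith
  have hn0 : 0 ≤ nR := by linarith
  have hab4 : a * b ≤ nR^2/4 := by nlinarith [sq_nonneg (a - b)]
  have h3 : a * (2*b^2 + 4*e1) + b * (2*a^2 + 4*e2) ≤ nR^3/2 + 8*nR*E := by
    have hh : a * (2*b^2 + 4*e1) + b * (2*a^2 + 4*e2)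
        = 2*(a*b)*(a+b) + 4*(a*e1 + b*e2) := by ring
    rw [hh, hnR]
    have h4 : a*e1 + b*e2 ≤ nR*e1 + nR*e2 := by nlinarith [mul_le_mul_of_nonneg_right hanb he10, mul_le_mul_of_nonneg_right hbnb he20]
    nlinarith [mul_le_mul_of_nonneg_right hab4 hn0, h4, hdegR]
  nlinarith [hs1, hs2, h1, h2, h3]

lemma alg_final {E nR s : ℝ} (hmain : E^2 ≤ nR^3/5 + 4 * nR * E)
    (hs2 : s^2 = nR) (hs200 : (200:ℝ) ≤ s) (hE0 : 0 ≤ E) :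
    E ≤ 0.468 * (nR * s) := by
  by_contra hgt
  push_neg at hgt
  have hE468 : 0.468 * (s^2 * s) < E := by rw [hs2]; exact hgt
  have hs0 : (0:ℝ) < s := by linarith
  have hEpos : 0 < E := lt_of_le_of_lt (by positivity) hE468
  have hm' : E^2 ≤ (s^2)^3/5 + 4*(s^2)*E := by rw [hs2]; exact hmain
  have hp1 : 0.468 * (s^2*s) * E < E * E :=
    mul_lt_mul_of_pos_right hE468 hEpos
  have hp2 : (0.468*s - 4) * (s^2*E) < s^6/5 := by nlinarith [hp1, hm']
  have hcs : (0:ℝ) < 0.468*s - 4 := by linarith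
  have hp3 : (0.468*s - 4) * (s^2 * (0.468*(s^2*s))) < (0.468*s - 4) * (s^2*E) := by
    apply mul_lt_mul_of_pos_left _ hcs
    apply mul_lt_mul_of_pos_left hE468 (by positivity)
  have hs5 : (0:ℝ) < s^5 := by positivity
  nlinarith [hp2, hp3, mul_nonneg (by linarith : (0:ℝ) ≤ s - 200) hs5.le]

end Alg

set_option maxHeartbeats 2000000 in
theorem ex_bip_B2_upper (ε : ℝ) (hε : 0 < ε) :
    ∃ N : ℕ, ∀ n : ℕ, N ≤ n → ∀ G : SimpleGraph (Fin n), G.Colorable 2 →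
      ¬ ContainsCopy (Bgraph 2) G →
      (G.edgeSet.ncard : ℝ) ≤ (0.468 + ε) * (n : ℝ) ^ (3/2 : ℝ) := by
  classical
  refine ⟨40000, fun n hn G hcol hfree => ?_⟩
  letI : DecidableRel G.Adj := Classical.decRel _
  obtain ⟨C⟩ := hcol
  have h01 : (0 : Fin 2) ≠ 1 := by decide
  have h10 : (1 : Fin 2) ≠ 0 := by decide
  set A := side G C 0 with hA
  set B := side G C 1 with hB
  have hBalt : B = Finset.univ.filter (fun v => ¬ C v = 0) := by
    rw [hB]
    apply Finset.filter_congr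
    intro v _
    constructor
    · intro h; rw [h]; decide
    · intro h
      have h2 : ∀ x : Fin 2, ¬ x = 0 → x = 1 := by decide
      exact h2 _ h
  have hab : A.card + B.card = n := by
    have h := Finset.card_filter_add_card_filter_not
      (s := (Finset.univ : Finset (Fin n))) (p := fun v => C v = 0)
    rw [hA, hBalt]
    simp only [side]
    rw [h]
    simp
  have hdeg : (∑ u ∈ A, G.degree u) + (∑ u ∈ B, G.degree u) = 2 * G.edgeFinset.card := by
    rw [hA, hBalt]
    show (∑ u ∈ Finset.univ.filter (fun v => C v = 0), G.degree u) + _ = _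
    rw [Finset.sum_filter_add_sum_filter_not]
    exact G.sum_degrees_eq_twice_card_edges
  have hbud1 := budget (C := C) hfree h01
  have hbud2 := budget (C := C) hfree h10
  have hs1 := side_ineq (C := C) hfree h01
  have hs2 := side_ineq (C := C) hfree h10
  set a : ℝ := (A.card : ℝ) with ha'
  set b : ℝ := (B.card : ℝ) with hb'
  set e1 : ℝ := ∑ u ∈ A, (G.degree u : ℝ) with he1
  set e2 : ℝ := ∑ u ∈ B, (G.degree u : ℝ) with he2
  set K : ℝ := ∑ u ∈ A, ((Uset G C 0 1 u).card : ℝ) with hK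
  set L : ℝ := ∑ u ∈ B, ((Uset G C 1 0 u).card : ℝ) with hL
  set E : ℝ := (G.edgeFinset.card : ℝ) with hE
  have hnR : a + b = (n : ℝ) := by
    rw [ha', hb']
    exact_mod_cast congrArg (Nat.cast (R := ℝ)) hab
  have hdegR : e1 + e2 = 2 * E := by
    rw [he1, he2, hE]
    have h := congrArg (Nat.cast (R := ℝ)) hdeg
    push_cast at h
    exact h
  have hbud1R : K + L ≤ e1 := by
    rw [hK, hL, he1]
    have h := (Nat.cast_le (α := ℝ)).2 hbud1
    push_cast at h
    exact h
  have hbud2R : L + K ≤ e2 := by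
    rw [hK, hL, he2]
    have h := (Nat.cast_le (α := ℝ)).2 hbud2
    push_cast at h
    exact h
  have ha0 : 0 ≤ a := Nat.cast_nonneg _
  have hb0 : 0 ≤ b := Nat.cast_nonneg _
  have he10 : 0 ≤ e1 := Finset.sum_nonneg (fun u _ => Nat.cast_nonneg _)
  have he20 : 0 ≤ e2 := Finset.sum_nonneg (fun u _ => Nat.cast_nonneg _)
  have hK0 : 0 ≤ K := Finset.sum_nonneg (fun u _ => Nat.cast_nonneg _)
  have hL0 : 0 ≤ L := Finset.sum_nonneg (fun u _ => Nat.cast_nonneg _)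
  have hE0 : 0 ≤ E := Nat.cast_nonneg _
  have hnn : (40000 : ℝ) ≤ (n : ℝ) := by exact_mod_cast hn
  have hn0 : (0:ℝ) < (n : ℝ) := by linarith
  have hmain : E^2 ≤ (n:ℝ)^3/5 + 4 * n * E :=
    alg_main hnR hdegR hbud1R hbud2R ha0 hb0 he10 he20 hK0 hL0 hE0 hs1 hs2
  set s : ℝ := Real.sqrt (n : ℝ) with hs
  have hsq : s^2 = (n:ℝ) := Real.sq_sqrt hn0.le
  have hs200 : (200 : ℝ) ≤ s := by
    rw [hs, show (200:ℝ) = Real.sqrt (200^2) by rw [Real.sqrt_sq]; norm_num]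
    exact Real.sqrt_le_sqrt (by nlinarith [hnn])
  have hEb : E ≤ 0.468 * ((n:ℝ) * s) := alg_final hmain hsq hs200 hE0
  have hrw : (n : ℝ) ^ (3/2 : ℝ) = (n:ℝ) * s := by
    rw [show (3/2 : ℝ) = 1 + 1/2 by norm_num, Real.rpow_add hn0, Real.rpow_one,
      ← Real.sqrt_eq_rpow, hs]
  have hncard : (G.edgeSet.ncard : ℝ) = E := by
    rw [hE]
    congr 1
    rw [Set.ncard_eq_toFinset_card']
    rw [show G.edgeSet.toFinset = G.edgeFinset by ext e; simp]
  rw [hncard, hrw]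
  have hpos : 0 ≤ (n:ℝ) * s := by positivity
  nlinarith [hEb, hε, hpos]
end
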